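/- arXiv:2008.03478 — 5 statements merged into one kernel-verified Lean document; each statement's English description precedes it below -/
import Mathlib

section
/- Let S be a nonnegative integrable random variable that is NWU, let Y₁,…,Yₙ be i.i.d. copies of S, and let r₁,…,rₙ > 0. Then E[min{Y₁/r₁, …, Yₙ/rₙ}] ≤ E[S] / (r₁ + ⋯ + rₙ). -/
open MeasureTheory ProbabilityTheory Finset

open Set in
lemma prod_Fbar_le_Fbar_sum {ι : Type*} (Fbar : ℝ → ℝ)
    (hFnn : ∀ t, 0 ≤ Fbar t)
    (hNWU : ∀ t₁ t₂ : ℝ, 0 ≤ t₁ → 0 ≤ t₂ → Fbar (t₁ + t₂) ≥ Fbar t₁ * Fbar t₂)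
    (a : ι → ℝ) (ha : ∀ i, 0 ≤ a i) (s : Finset ι) (hs : s.Nonempty) :
    ∏ i ∈ s, Fbar (a i) ≤ Fbar (∑ i ∈ s, a i) := by
  induction hs using Finset.Nonempty.cons_induction with
  | singleton i => simp
  | cons i s hi hs ih =>
      rw [Finset.prod_cons, Finset.sum_cons]
      calc Fbar (a i) * ∏ j ∈ s, Fbar (a j)
          ≤ Fbar (a i) * Fbar (∑ j ∈ s, a j) :=
            mul_le_mul_of_nonneg_left ih (hFnn _)
        _ ≤ Fbar (a i + ∑ j ∈ s, a j) :=
            hNWU _ _ (ha i) (Finset.sum_nonneg fun j _ => ha j)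

/-- For an NWU nonnegative integrable random variable `S`, i.i.d. copies `Y i` and
positive speeds `r i`, `E[min_i Y i / r i] ≤ E[S] / ∑ i, r i`. -/
theorem nwu_expected_min_le
    {Ω : Type*} [MeasurableSpace Ω] (P : Measure Ω) [IsProbabilityMeasure P]
    (S : Ω → ℝ) (hS : ∀ ω, 0 ≤ S ω) (hSint : Integrable S P)
    (Fbar : ℝ → ℝ) (hFbar : ∀ t, Fbar t = (P {ω | t < S ω}).toReal)
    (hNWU : ∀ t₁ t₂ : ℝ, 0 ≤ t₁ → 0 ≤ t₂ → Fbar (t₁ + t₂) ≥ Fbar t₁ * Fbar t₂)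
    (n : ℕ) (hn : 0 < n) (Y : Fin n → Ω → ℝ)
    (hYmeas : ∀ i, Measurable (Y i))
    (hindep : iIndepFun Y P)
    (hid : ∀ i, IdentDistrib (Y i) S P P)
    (r : Fin n → ℝ) (hr : ∀ i, 0 < r i) :
    (∫ ω, (⨅ i, Y i ω / r i) ∂P) ≤ (∫ ω, S ω ∂P) / ∑ i, r i := by
  have hne : Nonempty (Fin n) := ⟨⟨0, hn⟩⟩
  set R : ℝ := ∑ i, r i with hRdef
  have hRpos : 0 < R := Finset.sum_pos (fun i _ => hr i) Finset.univ_nonempty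
  have hFnn : ∀ t, 0 ≤ Fbar t := fun t => by rw [hFbar]; exact ENNReal.toReal_nonneg
  -- the min random variable
  set M : Ω → ℝ := fun ω => ⨅ i, Y i ω / r i with hMdef
  have hMmeas : Measurable M :=
    Measurable.iInf fun i => (hYmeas i).div_const _
  -- Y i is a.e. nonneg
  have hYnn : ∀ i, 0 ≤ᵐ[P] Y i := by
    intro i
    have : P (Y i ⁻¹' Set.Iio 0) = P (S ⁻¹' Set.Iio 0) :=
      (hid i).measure_mem_eq measurableSet_Iio
    have h0 : P (S ⁻¹' Set.Iio 0) = 0 := by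
      have : S ⁻¹' Set.Iio 0 = ∅ := by
        ext ω; simp [not_lt.2 (hS ω)]
      simp [this]
    refine (ae_iff).2 ?_
    simpa [Set.preimage, Set.Iio, not_le] using this.trans h0
  have hMnn : 0 ≤ᵐ[P] M := by
    have := MeasureTheory.ae_all_iff.2 hYnn
    filter_upwards [this] with ω hω
    exact le_ciInf fun i => div_nonneg (hω i) (hr i).le
  -- integrability of M
  have hY0int : Integrable (Y ⟨0, hn⟩) P := (hid _).integrable_iff.2 hSint
  have hMint : Integrable M P := by
    refine Integrable.mono' (hY0int.div_const (r (⟨0, hn⟩ : Fin n))) hMmeas.aestronglyMeasurable ?_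
    filter_upwards [hMnn] with ω hω
    rw [Real.norm_eq_abs, abs_of_nonneg hω]
    exact ciInf_le (f := fun i => Y i ω / r i)
      (Set.Finite.bddBelow (Set.finite_range _)) (⟨0, hn⟩ : Fin n)
  -- the tail function of S
  set tail : ℝ → ℝ := fun t => (P {ω | t < S ω}).toReal with htail
  have tail_meas : Measurable tail :=
    Measurable.ennreal_toReal <|
      Antitone.measurable fun _ _ hst => measure_mono fun _ h => lt_of_le_of_lt hst h
  have key := lintegral_eq_lintegral_meas_lt P (Filter.Eventually.of_forall hS)
    hSint.aemeasurable
  have fin : ∫⁻ t in Set.Ioi 0, P {a | t < S a} < ⊤ := by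
    rw [← key]; exact hSint.lintegral_lt_top
  have tail_int : IntegrableOn tail (Set.Ioi 0) := by
    refine ⟨tail_meas.aestronglyMeasurable, ?_⟩
    rw [hasFiniteIntegral_iff_ofReal (Filter.Eventually.of_forall fun t =>
      ENNReal.toReal_nonneg)]
    calc ∫⁻ t in Set.Ioi 0, ENNReal.ofReal (tail t)
        = ∫⁻ t in Set.Ioi 0, P {a | t < S a} :=
          lintegral_congr fun t => by
            rw [htail]; exact ENNReal.ofReal_toReal (measure_ne_top P _)
      _ < ⊤ := fin
  -- layer cake for M
  have hLHS : (∫ ω, M ω ∂P) = ∫ t in Set.Ioi 0, (P {ω | t < M ω}).toReal :=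
    hMint.integral_eq_integral_meas_lt hMnn
  -- tail of M equals product, bounded by tail at R t
  have hprod : ∀ t : ℝ, 0 < t → (P {ω | t < M ω}).toReal ≤ tail (t * R) := by
    intro t ht
    have hset : {ω | t < M ω} = ⋂ i, Y i ⁻¹' Set.Ioi (t * r i) := by
      ext ω
      simp only [Set.mem_setOf_eq, Set.mem_iInter, Set.mem_preimage, Set.mem_Ioi, hMdef]
      constructor
      · intro h i
        have := h.trans_le (ciInf_le (Set.Finite.bddBelow (Set.finite_range _)) i)
        exact (lt_div_iff₀ (hr i)).1 this
      · intro h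
        obtain ⟨j, hj⟩ := Finite.exists_min fun i => Y i ω / r i
        exact lt_of_lt_of_le ((lt_div_iff₀ (hr j)).2 (h j)) (le_ciInf hj)
    have hmeasP : P (⋂ i, Y i ⁻¹' Set.Ioi (t * r i))
        = ∏ i, P (Y i ⁻¹' Set.Ioi (t * r i)) :=
      hindep.meas_iInter fun i => ⟨Set.Ioi (t * r i), measurableSet_Ioi, rfl⟩
    have hident : ∀ i, P (Y i ⁻¹' Set.Ioi (t * r i)) = P {ω | t * r i < S ω} := by
      intro i
      have := (hid i).measure_mem_eq (s := Set.Ioi (t * r i)) measurableSet_Ioi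
      simpa [Set.preimage, Set.mem_Ioi] using this
    rw [hset, hmeasP]
    have : (∏ i, P (Y i ⁻¹' Set.Ioi (t * r i))).toReal = ∏ i, Fbar (t * r i) := by
      rw [ENNReal.toReal_prod]
      exact Finset.prod_congr rfl fun i _ => by rw [hident i, hFbar]
    rw [this]
    have h2 : tail (t * R) = Fbar (t * R) := (hFbar _).symm
    rw [h2]
    have hmulsum : ∑ i, t * r i = t * R := by rw [← Finset.mul_sum]
    calc ∏ i, Fbar (t * r i) ≤ Fbar (∑ i, t * r i) :=
          prod_Fbar_le_Fbar_sum Fbar hFnn hNWU _ (fun i => mul_nonneg ht.le (hr i).le) _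
            Finset.univ_nonempty
      _ = Fbar (t * R) := by rw [hmulsum]
  -- scaled tail is integrable
  have htailR_int : IntegrableOn (fun t => tail (t * R)) (Set.Ioi 0) := by
    have h := integrableOn_Ioi_comp_mul_right_iff tail 0 hRpos
    rw [zero_mul] at h
    exact h.2 tail_int
  -- compare integrals
  have hcompare : (∫ t in Set.Ioi 0, (P {ω | t < M ω}).toReal)
      ≤ ∫ t in Set.Ioi 0, tail (t * R) := by
    refine integral_mono_of_nonneg (Filter.Eventually.of_forall fun t =>
      ENNReal.toReal_nonneg) htailR_int ?_
    refine (ae_restrict_iff' measurableSet_Ioi).2 (Filter.Eventually.of_forall ?_)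
    exact fun t ht => hprod t ht
  -- compute RHS
  have hRHS : (∫ t in Set.Ioi 0, tail (t * R)) = (∫ ω, S ω ∂P) / R := by
    have hS' := hSint.integral_eq_integral_meas_lt (Filter.Eventually.of_forall hS)
    simp only [measureReal_def] at hS'
    rw [integral_comp_mul_right_Ioi tail 0 hRpos, zero_mul, smul_eq_mul,
      ← hS']
    ring
  calc (∫ ω, (⨅ i, Y i ω / r i) ∂P) = ∫ ω, M ω ∂P := rfl
    _ = ∫ t in Set.Ioi 0, (P {ω | t < M ω}).toReal := hLHS
    _ ≤ ∫ t in Set.Ioi 0, tail (t * R) := hcompare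
    _ = (∫ ω, S ω ∂P) / R := hRHS
end

section
/- Let S be a nonnegative integrable random variable that is NBU, let Y₁,…,Yₙ be i.i.d. copies of S, and let r₁,…,rₙ > 0. Then E[min{Y₁/r₁, …, Yₙ/rₙ}] ≥ E[S] / (r₁ + ⋯ + rₙ). -/
open MeasureTheory ProbabilityTheory Finset

/-- For an NBU nonnegative integrable random variable `S`, i.i.d. copies `Y i` and
positive speeds `r i`, `E[min_i Y i / r i] ≥ E[S] / ∑ i, r i`. -/
theorem nbu_expected_min_ge
    {Ω : Type*} [MeasurableSpace Ω] (P : Measure Ω) [IsProbabilityMeasure P]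
    (S : Ω → ℝ) (hS : ∀ ω, 0 ≤ S ω) (hSint : Integrable S P)
    (Fbar : ℝ → ℝ) (hFbar : ∀ t, Fbar t = (P {ω | t < S ω}).toReal)
    (hNBU : ∀ t₁ t₂ : ℝ, 0 ≤ t₁ → 0 ≤ t₂ → Fbar (t₁ + t₂) ≤ Fbar t₁ * Fbar t₂)
    (n : ℕ) (hn : 0 < n) (Y : Fin n → Ω → ℝ)
    (hYmeas : ∀ i, Measurable (Y i))
    (hindep : iIndepFun Y P)
    (hid : ∀ i, IdentDistrib (Y i) S P P)
    (r : Fin n → ℝ) (hr : ∀ i, 0 < r i) :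
    (∫ ω, (⨅ i, Y i ω / r i) ∂P) ≥ (∫ ω, S ω ∂P) / ∑ i, r i := by
  haveI : Nonempty (Fin n) := ⟨⟨0, hn⟩⟩
  set s : ℝ := ∑ i, r i with hs_def
  have hs : 0 < s := Finset.sum_pos (fun i _ => hr i) ⟨⟨0, hn⟩, Finset.mem_univ _⟩
  set X : Ω → ℝ := fun ω => ⨅ i, Y i ω / r i with hX_def
  -- nonnegativity of Fbar
  have hFnn : ∀ t, 0 ≤ Fbar t := fun t => by rw [hFbar]; exact ENNReal.toReal_nonneg
  -- each Y i is a.e. nonnegative and integrable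
  have hYnn : ∀ i, ∀ᵐ ω ∂P, 0 ≤ Y i ω := by
    intro i
    have h0 : P {ω | Y i ω < 0} = 0 := by
      have := (hid i).measure_mem_eq (s := Set.Iio 0) measurableSet_Iio
      have hSz : P (S ⁻¹' Set.Iio 0) = 0 := by
        have : S ⁻¹' Set.Iio 0 = ∅ := by
          ext ω; simp [Set.mem_preimage, not_lt.mpr (hS ω)]
        simp [this]
      simpa [Set.preimage, Set.Iio] using this.trans hSz
    filter_upwards [measure_eq_zero_iff_ae_notMem.mp h0] with ω hω
    simpa using not_lt.mp hω
  have hYint : ∀ i, Integrable (Y i) P := fun i => ((hid i).integrable_iff).mpr hSint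
  -- X is measurable
  have hXmeas : Measurable X :=
    Measurable.iInf (fun i => (hYmeas i).div_const _)
  have hbdd : ∀ ω, BddBelow (Set.range fun i => Y i ω / r i) := fun ω =>
    (Set.finite_range _).bddBelow
  -- X is a.e. nonneg and integrable
  have hXnn : ∀ᵐ ω ∂P, 0 ≤ X ω := by
    filter_upwards [ae_all_iff.mpr hYnn] with ω hω
    exact le_ciInf fun i => div_nonneg (hω i) (hr i).le
  have hXle : ∀ ω, X ω ≤ Y ⟨0, hn⟩ ω / r ⟨0, hn⟩ := fun ω =>
    ciInf_le (hbdd ω) _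
  have hXint : Integrable X P := by
    refine Integrable.mono' (g := fun ω => Y ⟨0, hn⟩ ω / r ⟨0, hn⟩)
      ((hYint ⟨0, hn⟩).div_const (r ⟨0, hn⟩)) hXmeas.aestronglyMeasurable ?_
    filter_upwards [hXnn, hYnn ⟨0, hn⟩] with ω h1 h2
    rw [Real.norm_eq_abs, abs_of_nonneg h1]
    exact hXle ω
  -- tail of X factorizes
  have htail : ∀ t : ℝ, P {ω | t < X ω} = ∏ i, P {ω | t * r i < Y i ω} := by
    intro t
    have hset : {ω | t < X ω} = ⋂ i, Y i ⁻¹' Set.Ioi (t * r i) := by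
      ext ω
      simp only [Set.mem_setOf_eq, Set.mem_iInter, Set.mem_preimage, Set.mem_Ioi, hX_def]
      constructor
      · intro h i
        have := h.trans_le (ciInf_le (hbdd ω) i)
        exact (lt_div_iff₀ (hr i)).mp this
      · intro h
        obtain ⟨i, hi⟩ := exists_eq_ciInf_of_finite (f := fun i => Y i ω / r i)
        rw [← hi]
        exact (lt_div_iff₀ (hr i)).mpr (h i)
    rw [hset, hindep.meas_iInter (fun i => ⟨Set.Ioi (t * r i), measurableSet_Ioi, rfl⟩)]
    rfl
  have htail' : ∀ t : ℝ, (P {ω | t < X ω}).toReal = ∏ i, Fbar (t * r i) := by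
    intro t
    rw [htail t, ENNReal.toReal_prod]
    refine Finset.prod_congr rfl fun i _ => ?_
    rw [hFbar]
    congr 1
    have := (hid i).measure_mem_eq (s := Set.Ioi (t * r i)) measurableSet_Ioi
    simpa [Set.preimage, Set.Ioi] using this
  -- NBU for finitely many summands
  have hNBUprod : ∀ (f : Fin n → ℝ), (∀ i, 0 ≤ f i) →
      Fbar (∑ i, f i) ≤ ∏ i, Fbar (f i) := by
    intro f hf
    have key : ∀ (u : Finset (Fin n)), u.Nonempty →
        Fbar (∑ i ∈ u, f i) ≤ ∏ i ∈ u, Fbar (f i) := by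
      intro u hu
      induction hu using Finset.Nonempty.cons_induction with
      | singleton i => simp
      | cons a u ha hu ih =>
        rw [Finset.sum_cons, Finset.prod_cons]
        calc Fbar (f a + ∑ i ∈ u, f i)
            ≤ Fbar (f a) * Fbar (∑ i ∈ u, f i) :=
              hNBU _ _ (hf a) (Finset.sum_nonneg fun i _ => hf i)
          _ ≤ Fbar (f a) * ∏ i ∈ u, Fbar (f i) :=
              mul_le_mul_of_nonneg_left ih (hFnn _)
    exact key Finset.univ Finset.univ_nonempty
  -- the dominating tail function is integrable on Ioi 0
  have hGanti : Antitone fun t : ℝ => P {ω | t < X ω} := fun a b hab =>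
    measure_mono fun ω h => hab.trans_lt h
  have hGmeas : Measurable fun t : ℝ => (P {ω | t < X ω}).toReal :=
    hGanti.measurable.ennreal_toReal
  have hGlint : ∫⁻ t in Set.Ioi (0:ℝ), P {ω | t < X ω} ≠ ⊤ := by
    rw [← lintegral_eq_lintegral_meas_lt P hXnn hXmeas.aemeasurable]
    exact hXint.lintegral_lt_top.ne
  have hGint : Integrable (fun t => (P {ω | t < X ω}).toReal)
      (volume.restrict (Set.Ioi 0)) :=
    integrable_toReal_of_lintegral_ne_top hGanti.measurable.aemeasurable hGlint
  -- the small function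
  have hHanti : Antitone fun t : ℝ => P {ω | t * s < S ω} := by
    intro a b hab
    refine measure_mono fun ω h => ?_
    exact lt_of_le_of_lt (mul_le_mul_of_nonneg_right hab hs.le) h
  have hHmeas : Measurable fun t : ℝ => Fbar (t * s) := by
    simp only [hFbar]
    exact hHanti.measurable.ennreal_toReal
  have hle : ∀ t ∈ Set.Ioi (0:ℝ), Fbar (t * s) ≤ (P {ω | t < X ω}).toReal := by
    intro t ht
    rw [htail' t]
    have : t * s = ∑ i, t * r i := by rw [hs_def, Finset.mul_sum]
    rw [this]
    exact hNBUprod _ fun i => mul_nonneg (le_of_lt ht) (hr i).le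
  have hHint : Integrable (fun t => Fbar (t * s)) (volume.restrict (Set.Ioi 0)) := by
    refine Integrable.mono' hGint hHmeas.aestronglyMeasurable ?_
    rw [ae_restrict_iff' measurableSet_Ioi]
    refine ae_of_all _ fun t ht => ?_
    rw [Real.norm_eq_abs, abs_of_nonneg (hFnn _)]
    exact hle t ht
  -- put it together
  have step1 : ∫ ω, X ω ∂P = ∫ t in Set.Ioi (0:ℝ), (P {ω | t < X ω}).toReal :=
    hXint.integral_eq_integral_meas_lt hXnn
  have step2 : ∫ t in Set.Ioi (0:ℝ), (P {ω | t < X ω}).toReal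
      ≥ ∫ t in Set.Ioi (0:ℝ), Fbar (t * s) := by
    refine setIntegral_mono_on hHint hGint measurableSet_Ioi hle
  have step3 : ∫ t in Set.Ioi (0:ℝ), Fbar (t * s) = s⁻¹ * ∫ ω, S ω ∂P := by
    have hS' : ∫ u in Set.Ioi (0:ℝ), Fbar u = ∫ ω, S ω ∂P := by
      rw [funext hFbar]
      exact (hSint.integral_eq_integral_meas_lt (ae_of_all _ hS)).symm
    have := integral_comp_mul_left_Ioi (g := Fbar) (a := 0) hs
    simp only [mul_zero] at this
    calc ∫ t in Set.Ioi (0:ℝ), Fbar (t * s)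
        = ∫ t in Set.Ioi (0:ℝ), Fbar (s * t) := by
          simp_rw [mul_comm]
      _ = s⁻¹ • ∫ u in Set.Ioi (0:ℝ), Fbar u := this
      _ = s⁻¹ * ∫ ω, S ω ∂P := by rw [hS', smul_eq_mul]
  rw [ge_iff_le, div_eq_inv_mul, ← step3, step1]
  exact step2
end

section
/- Let S be a nonnegative integrable random variable that is strictly NWU, i.e. F̄(t₁+t₂) > F̄(t₁)F̄(t₂) for all t₁,t₂ > 0 with F̄(t₁), F̄(t₂) > 0, and suppose P(S > 0) > 0. If Y₁, Y₂ are i.i.d. copies of S, then E[min{Y₁, Y₂}] < E[S]/2. -/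
open MeasureTheory ProbabilityTheory Set

/-- For a strictly NWU nonnegative integrable random variable `S` with `P(S > 0) > 0`,
and `Y₁, Y₂` i.i.d. copies of `S`, `E[min{Y₁, Y₂}] < E[S] / 2`. -/
theorem strictly_nwu_expected_min_lt_half
    {Ω : Type*} [MeasurableSpace Ω] (P : Measure Ω) [IsProbabilityMeasure P]
    (S : Ω → ℝ) (hS : ∀ ω, 0 ≤ S ω) (hSint : Integrable S P)
    (Fbar : ℝ → ℝ) (hFbar : ∀ t, Fbar t = (P {ω | t < S ω}).toReal)
    (hStrictNWU : ∀ t₁ t₂ : ℝ, 0 < t₁ → 0 < t₂ → 0 < Fbar t₁ → 0 < Fbar t₂ →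
      Fbar t₁ * Fbar t₂ < Fbar (t₁ + t₂))
    (hpos : 0 < Fbar 0)
    (Y₁ Y₂ : Ω → ℝ) (hY₁ : Measurable Y₁) (hY₂ : Measurable Y₂)
    (hindep : IndepFun Y₁ Y₂ P)
    (hid₁ : IdentDistrib Y₁ S P P) (hid₂ : IdentDistrib Y₂ S P P) :
    (∫ ω, min (Y₁ ω) (Y₂ ω) ∂P) < (∫ ω, S ω ∂P) / 2 := by
  have hFbar_eq : Fbar = fun t => (P {ω | t < S ω}).toReal := funext hFbar
  have hGanti : Antitone (fun t : ℝ => P {ω | t < S ω}) := fun s t hst =>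
    measure_mono fun ω hω => lt_of_le_of_lt hst hω
  have hGmble : Measurable (fun t : ℝ => P {ω | t < S ω}) := hGanti.measurable
  have hFmble : Measurable Fbar := by rw [hFbar_eq]; exact hGmble.ennreal_toReal
  have hFnn : ∀ t, 0 ≤ Fbar t := fun t => by rw [hFbar]; exact ENNReal.toReal_nonneg
  have hFle : ∀ t, Fbar t ≤ 1 := fun t => by
    rw [hFbar]
    simpa using ENNReal.toReal_mono ENNReal.one_ne_top prob_le_one
  have hFanti : Antitone Fbar := fun s t hst => by
    rw [hFbar, hFbar]
    exact ENNReal.toReal_mono (measure_ne_top P _) (hGanti hst)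
  -- integrability of Fbar on Ioi 0
  have hlint : ∫⁻ t in Ioi (0:ℝ), P {ω | t < S ω} ≠ ⊤ := by
    rw [← lintegral_eq_lintegral_meas_lt P (Filter.Eventually.of_forall hS) hSint.aemeasurable]
    exact hSint.lintegral_lt_top.ne
  have hFint : IntegrableOn Fbar (Ioi (0:ℝ)) := by
    rw [hFbar_eq]
    exact integrable_toReal_of_lintegral_ne_top hGmble.aemeasurable hlint
  -- E[S]
  have hES : ∫ ω, S ω ∂P = ∫ t in Ioi (0:ℝ), Fbar t := by
    rw [hSint.integral_eq_integral_meas_lt (Filter.Eventually.of_forall hS)]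
    simp_rw [hFbar]
    rfl
  -- Y's are integrable and nonneg a.e.
  have hY₁int : Integrable Y₁ P := hid₁.integrable_iff.mpr hSint
  have hY₂int : Integrable Y₂ P := hid₂.integrable_iff.mpr hSint
  have hminint : Integrable (fun ω => min (Y₁ ω) (Y₂ ω)) P := hY₁int.inf hY₂int
  have hYnn : ∀ (Y : Ω → ℝ), IdentDistrib Y S P P → ∀ᵐ ω ∂P, 0 ≤ Y ω := by
    intro Y hid
    have hpre : P (Y ⁻¹' Iio 0) = 0 := by
      rw [hid.measure_mem_eq measurableSet_Iio]
      have : S ⁻¹' Iio 0 = ∅ := by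
        ext ω; simp [not_lt.mpr (hS ω)]
      simp [this]
    rw [ae_iff]
    convert hpre using 2
    ext ω; simp [not_le]
  have hminnn : ∀ᵐ ω ∂P, 0 ≤ min (Y₁ ω) (Y₂ ω) := by
    filter_upwards [hYnn Y₁ hid₁, hYnn Y₂ hid₂] with ω h1 h2
    exact le_min h1 h2
  -- tail of min
  have hmin_meas : ∀ t : ℝ, P {ω | t < min (Y₁ ω) (Y₂ ω)}
      = P {ω | t < S ω} * P {ω | t < S ω} := by
    intro t
    have e : {ω | t < min (Y₁ ω) (Y₂ ω)} = Y₁ ⁻¹' (Ioi t) ∩ Y₂ ⁻¹' (Ioi t) := by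
      ext ω; simp [lt_min_iff]
    rw [e, hindep.measure_inter_preimage_eq_mul _ _ measurableSet_Ioi measurableSet_Ioi,
      hid₁.measure_mem_eq measurableSet_Ioi, hid₂.measure_mem_eq measurableSet_Ioi]
    rfl
  have hEmin : ∫ ω, min (Y₁ ω) (Y₂ ω) ∂P = ∫ t in Ioi (0:ℝ), Fbar t * Fbar t := by
    rw [hminint.integral_eq_integral_meas_lt hminnn]
    refine integral_congr_ae (Filter.Eventually.of_forall fun t => ?_)
    show (P {ω | t < min (Y₁ ω) (Y₂ ω)}).toReal = Fbar t * Fbar t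
    rw [hmin_meas t, ENNReal.toReal_mul, hFbar]
  -- integrability of the two comparison functions
  have hsqint : IntegrableOn (fun t => Fbar t * Fbar t) (Ioi (0:ℝ)) := by
    refine Integrable.mono hFint ((hFmble.mul hFmble).aestronglyMeasurable) ?_
    refine Filter.Eventually.of_forall fun t => ?_
    rw [Real.norm_eq_abs, Real.norm_eq_abs, abs_of_nonneg (hFnn t),
      abs_of_nonneg (mul_nonneg (hFnn t) (hFnn t))]
    nlinarith [hFnn t, hFle t]
  have h2int : IntegrableOn (fun t => Fbar (2 * t)) (Ioi (0:ℝ)) := by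
    refine (integrableOn_Ioi_comp_mul_left_iff Fbar 0 two_pos).mpr ?_
    simpa using hFint
  -- scaling identity
  have hhalf : ∫ t in Ioi (0:ℝ), Fbar (2 * t) = (∫ t in Ioi (0:ℝ), Fbar t) / 2 := by
    rw [integral_comp_mul_left_Ioi Fbar 0 two_pos]
    simp [smul_eq_mul]
    ring
  -- find ε with Fbar ε > 0
  obtain ⟨n, hn⟩ : ∃ n : ℕ, P {ω | 1 / (n + 1 : ℝ) < S ω} ≠ 0 := by
    by_contra h
    push_neg at h
    have hU : {ω | 0 < S ω} = ⋃ n : ℕ, {ω | 1 / (n + 1 : ℝ) < S ω} := by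
      ext ω
      simp only [mem_setOf_eq, mem_iUnion]
      constructor
      · intro hω; exact exists_nat_one_div_lt hω
      · rintro ⟨n, hn⟩; exact lt_trans (by positivity) hn
    have : P {ω | 0 < S ω} = 0 := by
      rw [hU]; exact measure_iUnion_null h
    rw [hFbar] at hpos
    simp [this] at hpos
  set ε : ℝ := 1 / (n + 1 : ℝ) with hεdef
  have hε : 0 < ε := by positivity
  have hFε : 0 < Fbar ε := by
    rw [hFbar]
    exact ENNReal.toReal_pos hn (measure_ne_top P _)
  -- pointwise inequalities
  have hle : ∀ t ∈ Ioi (0:ℝ), Fbar t * Fbar t ≤ Fbar (2 * t) := by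
    intro t ht
    rcases eq_or_lt_of_le (hFnn t) with h | h
    · rw [← h, mul_zero]; exact hFnn (2 * t)
    · have := hStrictNWU t t ht ht h h
      rw [two_mul]; exact this.le
  have hlt : ∀ t ∈ Ioc (0:ℝ) ε, Fbar t * Fbar t < Fbar (2 * t) := by
    intro t ht
    have hFt : 0 < Fbar t := lt_of_lt_of_le hFε (hFanti ht.2)
    have := hStrictNWU t t ht.1 ht.1 hFt hFt
    rw [two_mul]; exact this
  -- strict integral inequality
  have hgint : IntegrableOn (fun t => Fbar (2 * t) - Fbar t * Fbar t) (Ioi (0:ℝ)) :=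
    h2int.sub hsqint
  have hgpos : 0 < ∫ t in Ioi (0:ℝ), (Fbar (2 * t) - Fbar t * Fbar t) := by
    rw [setIntegral_pos_iff_support_of_nonneg_ae ?_ hgint]
    · refine lt_of_lt_of_le ?_ (measure_mono (?_ :
        Ioc (0:ℝ) ε ⊆ Function.support (fun t => Fbar (2 * t) - Fbar t * Fbar t) ∩ Ioi 0))
      · rw [Real.volume_Ioc]
        simp [ENNReal.ofReal_pos, hε]
      · intro t ht
        exact ⟨sub_ne_zero.mpr (hlt t ht).ne', ht.1⟩
    · refine (ae_restrict_iff' measurableSet_Ioi).mpr ?_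
      exact Filter.Eventually.of_forall fun t ht => sub_nonneg.mpr (hle t ht)
  have hstrict : ∫ t in Ioi (0:ℝ), Fbar t * Fbar t < ∫ t in Ioi (0:ℝ), Fbar (2 * t) := by
    rw [integral_sub h2int hsqint] at hgpos
    linarith
  calc (∫ ω, min (Y₁ ω) (Y₂ ω) ∂P) = ∫ t in Ioi (0:ℝ), Fbar t * Fbar t := hEmin
    _ < ∫ t in Ioi (0:ℝ), Fbar (2 * t) := hstrict
    _ = (∫ t in Ioi (0:ℝ), Fbar t) / 2 := hhalf
    _ = (∫ ω, S ω ∂P) / 2 := by rw [hES]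
end

section
/- Let S be a nonnegative integrable random variable that is NWU, with complementary cdf F̄, and let Y₁,…,Y_N be i.i.d. copies of S. Then for every 1 ≤ d ≤ N: N · E[min{Y₁,…,Y_N}] ≤ d · E[min{Y₁,…,Y_d}]. Equivalently, d ↦ d·∫₀^∞ F̄(t)^d dt is nonincreasing when restricted to the values d and N. For NBU distributions the reverse inequality holds. -/
section AggAux
open MeasureTheory Set
open scoped ENNReal

section helpers
variable {ι : Type*} [Fintype ι] [Nonempty ι]

lemma finInf_eq_inf' (f : ι → ℝ) : (⨅ i, f i) = Finset.univ.inf' Finset.univ_nonempty f := by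
  obtain ⟨i₀, -, hi₀⟩ := Finset.exists_mem_eq_inf' Finset.univ_nonempty f
  refine le_antisymm ?_ (le_ciInf fun i => Finset.inf'_le f (Finset.mem_univ i))
  rw [hi₀]
  exact ciInf_le (Set.Finite.bddBelow (Set.finite_range f)) i₀

lemma lt_finInf_iff (f : ι → ℝ) (t : ℝ) : t < (⨅ i, f i) ↔ ∀ i, t < f i := by
  rw [finInf_eq_inf', Finset.lt_inf'_iff]
  simp

lemma le_finInf_iff (f : ι → ℝ) (t : ℝ) : t ≤ (⨅ i, f i) ↔ ∀ i, t ≤ f i := by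
  rw [finInf_eq_inf', Finset.le_inf'_iff]
  simp

lemma finInf_le (f : ι → ℝ) (i : ι) : (⨅ j, f j) ≤ f i := by
  rw [finInf_eq_inf']; exact Finset.inf'_le f (Finset.mem_univ i)

lemma measurable_finInf {Ω : Type*} [MeasurableSpace Ω] (f : ι → Ω → ℝ)
    (hf : ∀ i, Measurable (f i)) : Measurable (fun ω => ⨅ i, f i ω) := by
  simp only [finInf_eq_inf']
  have : ∀ (s : Finset ι) (hs : s.Nonempty), Measurable (fun ω => s.inf' hs (fun i => f i ω)) := by
    intro s hs
    induction hs using Finset.Nonempty.cons_induction with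
    | singleton a => simpa using hf a
    | cons a s ha hs ih =>
        have : ∀ ω, (Finset.cons a s ha).inf' (Finset.cons_nonempty ha) (fun i => f i ω)
            = (f a ω) ⊓ s.inf' hs (fun i => f i ω) := fun ω => Finset.inf'_cons hs _
        simp only [this]
        exact (hf a).inf ih
  exact this _ _

end helpers

section seq

lemma iInter_Ioi_sub (a c : ℝ) (hc : 0 < c) : (⋂ n : ℕ, Ioi (a - c / (n + 1))) = Ici a := by
  ext x
  simp only [mem_iInter, mem_Ioi, mem_Ici]
  constructor
  · intro h
    by_contra hx
    push_neg at hx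
    obtain ⟨n, hn⟩ := exists_nat_gt (c / (a - x))
    have hax : 0 < a - x := by linarith
    have h1 : c / (a - x) < (n + 1 : ℝ) := by
      have : (n : ℝ) < n + 1 := by linarith
      linarith
    have h2 : c / ((n:ℝ) + 1) < a - x := by
      rw [div_lt_iff₀ (by positivity)] at h1 ⊢
      · linarith [mul_comm (a - x) ((n:ℝ)+1)]
    have := h n
    linarith
  · intro h n
    have : 0 < c / ((n:ℝ) + 1) := by positivity
    linarith

lemma iUnion_Ici_add (a c : ℝ) (hc : 0 < c) : (⋃ n : ℕ, Ici (a + c / (n + 1))) = Ioi a := by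
  ext x
  simp only [mem_iUnion, mem_Ici, mem_Ioi]
  constructor
  · rintro ⟨n, hn⟩
    have : 0 < c / ((n:ℝ) + 1) := by positivity
    linarith
  · intro h
    obtain ⟨n, hn⟩ := exists_nat_gt (c / (x - a))
    have hax : 0 < x - a := by linarith
    have h1 : c / (x - a) < (n + 1 : ℝ) := by
      have : (n : ℝ) < n + 1 := by linarith
      linarith
    have h2 : c / ((n:ℝ) + 1) < x - a := by
      rw [div_lt_iff₀ (by positivity)] at h1 ⊢
      · linarith [mul_comm (x - a) ((n:ℝ)+1)]
    exact ⟨n, by linarith⟩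

lemma iUnion_Ioi_add (a c : ℝ) (hc : 0 < c) : (⋃ n : ℕ, Ioi (a + c / (n + 1))) = Ioi a := by
  apply Set.Subset.antisymm
  · refine iUnion_subset fun n => ?_
    intro x hx
    have : 0 < c / ((n:ℝ) + 1) := by positivity
    exact lt_trans (by linarith : a < a + c / ((n:ℝ) + 1)) hx
  · rw [← iUnion_Ici_add a c hc]
    refine iUnion_subset fun n => ?_
    intro x hx
    refine mem_iUnion.2 ⟨n + 1, ?_⟩
    simp only [mem_Ioi]
    have h1 : c / ((n:ℝ) + 1 + 1) < c / ((n:ℝ) + 1) := by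
      apply div_lt_div_of_pos_left hc (by positivity) (by linarith)
    have := mem_Ici.mp hx
    push_cast
    linarith

variable (μ : Measure ℝ) [IsFiniteMeasure μ]

lemma measure_Ici_eq_iInf (a c : ℝ) (hc : 0 < c) :
    μ (Ici a) = ⨅ n : ℕ, μ (Ioi (a - c / (n + 1))) := by
  rw [← iInter_Ioi_sub a c hc]
  refine Directed.measure_iInter (fun n => measurableSet_Ioi.nullMeasurableSet) ?_
    ⟨0, measure_ne_top μ _⟩
  have anti : Antitone fun n : ℕ => Ioi (a - c / (n + 1)) := by
    intro n m hnm
    apply Ioi_subset_Ioi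
    have h1 : c / ((m:ℝ) + 1) ≤ c / ((n:ℝ) + 1) := by
      apply div_le_div_of_nonneg_left hc.le (by positivity)
      push_cast; linarith [(Nat.cast_le (α := ℝ)).2 hnm]
    linarith
  exact anti.directed_ge

lemma measure_Ioi_eq_iSup_Ici (a c : ℝ) (hc : 0 < c) :
    μ (Ioi a) = ⨆ n : ℕ, μ (Ici (a + c / (n + 1))) := by
  rw [← iUnion_Ici_add a c hc]
  refine Directed.measure_iUnion ?_
  have mono : Monotone fun n : ℕ => Ici (a + c / (n + 1)) := by
    intro n m hnm
    show Ici _ ⊆ Ici _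
    apply Ici_subset_Ici.mpr
    have h1 : c / ((m:ℝ) + 1) ≤ c / ((n:ℝ) + 1) := by
      apply div_le_div_of_nonneg_left hc.le (by positivity)
      linarith [(Nat.cast_le (α := ℝ)).2 hnm]
    linarith
  exact mono.directed_le

lemma measure_Ioi_eq_iSup_Ioi (a c : ℝ) (hc : 0 < c) :
    μ (Ioi a) = ⨆ n : ℕ, μ (Ioi (a + c / (n + 1))) := by
  rw [← iUnion_Ioi_add a c hc]
  refine Directed.measure_iUnion ?_
  have mono : Monotone fun n : ℕ => Ioi (a + c / (n + 1)) := by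
    intro n m hnm
    show Ioi _ ⊆ Ioi _
    apply Ioi_subset_Ioi
    have h1 : c / ((m:ℝ) + 1) ≤ c / ((n:ℝ) + 1) := by
      apply div_le_div_of_nonneg_left hc.le (by positivity)
      linarith [(Nat.cast_le (α := ℝ)).2 hnm]
    linarith
  exact mono.directed_le

/-- An upward-closed set with an infimum is `Ici` or `Ioi` of its infimum. -/
lemma upward_closed_eq (U : Set ℝ) (hne : U.Nonempty) (hbdd : BddBelow U)
    (hup : ∀ x ∈ U, ∀ y, x ≤ y → y ∈ U) :
    (sInf U ∈ U ∧ U = Ici (sInf U)) ∨ (sInf U ∉ U ∧ U = Ioi (sInf U)) := by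
  by_cases h : sInf U ∈ U
  · refine Or.inl ⟨h, Subset.antisymm (fun u hu => csInf_le hbdd hu) ?_⟩
    exact fun x hx => hup _ h _ hx
  · refine Or.inr ⟨h, Subset.antisymm ?_ ?_⟩
    · intro u hu
      rcases (csInf_le hbdd hu).lt_or_eq with h1 | h1
      · exact h1
      · exact absurd (h1 ▸ hu) h
    · intro x hx
      obtain ⟨u, hu, hux⟩ := (csInf_lt_iff hbdd hne).mp hx
      exact hup _ hu _ hux.le

end seq

section core
variable (μ ν : Measure ℝ) [IsProbabilityMeasure μ] [IsProbabilityMeasure ν] (k : ℕ)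

lemma exists_tail_small (ε : ℝ≥0∞) (hε : 0 < ε) : ∃ n : ℕ, μ (Ioi (n : ℝ)) < ε := by
  by_contra h
  push_neg at h
  have h1 : (⋂ n : ℕ, Ioi ((n : ℕ) : ℝ)) = (∅ : Set ℝ) := by
    ext x
    simp only [mem_iInter, mem_Ioi, mem_empty_iff_false, iff_false, not_forall, not_lt]
    obtain ⟨n, hn⟩ := exists_nat_gt x
    exact ⟨n, hn.le⟩
  have anti : Antitone fun n : ℕ => Ioi ((n : ℕ) : ℝ) := by
    intro n m hnm
    show Ioi _ ⊆ Ioi _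
    exact Ioi_subset_Ioi (Nat.cast_le.2 hnm)
  have h2 := Directed.measure_iInter (μ := μ)
    (fun n : ℕ => measurableSet_Ioi.nullMeasurableSet) anti.directed_ge ⟨0, measure_ne_top μ _⟩
  rw [h1, measure_empty] at h2
  have h3 : ε ≤ 0 := h2 ▸ le_iInf h
  exact hε.ne' (le_antisymm h3 zero_le)

variable {μ ν k}

lemma nu_meas_lt_Ici_ge (hk : 0 < k)
    (hν_Ici : ∀ a, ν (Ici a) = μ (Ici a) ^ k) (hν_Ioi : ∀ a, ν (Ioi a) = μ (Ioi a) ^ k)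
    (h0 : μ (Ici 0) = 1) {t : ℝ} (ht : 0 < t) (ht1 : t < 1) :
    1 - ENNReal.ofReal t ^ k ≤ ν {s | t < (μ (Ici s)).toReal} := by
  set U : Set ℝ := {s | (μ (Ici s)).toReal ≤ t} with hUdef
  have hAU : {s | t < (μ (Ici s)).toReal} = Uᶜ := by
    ext s
    show t < _ ↔ s ∈ Uᶜ
    rw [mem_compl_iff, hUdef, mem_setOf_eq, not_le]
  have hup : ∀ x ∈ U, ∀ y, x ≤ y → y ∈ U := by
    intro x hx y hxy
    exact le_trans (ENNReal.toReal_mono (measure_ne_top μ _)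
      (measure_mono (Ici_subset_Ici.2 hxy))) hx
  have hne : U.Nonempty := by
    obtain ⟨n, hn⟩ := exists_tail_small μ (ENNReal.ofReal t) (ENNReal.ofReal_pos.2 ht)
    refine ⟨(n : ℝ) + 1, ?_⟩
    have h1 : μ (Ici ((n : ℝ) + 1)) ≤ ENNReal.ofReal t :=
      le_trans (measure_mono (Ici_subset_Ioi.2 (by linarith))) hn.le
    show (μ (Ici ((n:ℝ)+1))).toReal ≤ t
    exact le_trans (ENNReal.toReal_mono ENNReal.ofReal_ne_top h1)
      (ENNReal.toReal_ofReal ht.le).le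
  have hbdd : BddBelow U := by
    refine ⟨0, fun s hs => ?_⟩
    by_contra hneg
    push_neg at hneg
    have h1 : (1 : ℝ≥0∞) ≤ μ (Ici s) := h0 ▸ measure_mono (Ici_subset_Ici.2 hneg.le)
    have h2 : (μ (Ici s)).toReal = 1 := by
      have := measure_mono (subset_univ (Ici s)) (μ := μ)
      rw [measure_univ] at this
      simp [le_antisymm this h1]
    rw [hUdef] at hs
    simp only [mem_setOf_eq, h2] at hs
    linarith
  rcases upward_closed_eq U hne hbdd hup with ⟨hmem, hU⟩ | ⟨hmem, hU⟩
  · rw [hAU, hU]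
    rw [prob_compl_eq_one_sub measurableSet_Ici, hν_Ici]
    refine tsub_le_tsub_left (pow_le_pow_left₀ zero_le ?_ k) 1
    exact (ENNReal.le_ofReal_iff_toReal_le (measure_ne_top μ _) ht.le).2 hmem
  · rw [hAU, hU]
    rw [prob_compl_eq_one_sub measurableSet_Ioi, hν_Ioi]
    refine tsub_le_tsub_left (pow_le_pow_left₀ zero_le ?_ k) 1
    rw [measure_Ioi_eq_iSup_Ici μ (sInf U) 1 one_pos]
    refine iSup_le fun n => ?_
    have hsub : Ioi (sInf U) ⊆ U := le_of_eq hU.symm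
    have hpos : (0:ℝ) < 1 / ((n:ℝ)+1) := by positivity
    have hmem2 : sInf U + 1 / ((n : ℝ) + 1) ∈ U := hsub (mem_Ioi.2 (by linarith))
    exact (ENNReal.le_ofReal_iff_toReal_le (measure_ne_top μ _) ht.le).2 hmem2

lemma nu_meas_lt_Ioi_le (hk : 0 < k)
    (hν_Ici : ∀ a, ν (Ici a) = μ (Ici a) ^ k) (hν_Ioi : ∀ a, ν (Ioi a) = μ (Ioi a) ^ k)
    (h0 : μ (Ici 0) = 1) {t : ℝ} (ht : 0 < t) (ht1 : t < 1) :
    ν {s | t < (μ (Ioi s)).toReal} ≤ 1 - ENNReal.ofReal t ^ k := by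
  set U : Set ℝ := {s | (μ (Ioi s)).toReal ≤ t} with hUdef
  have hAU : {s | t < (μ (Ioi s)).toReal} = Uᶜ := by
    ext s
    show t < _ ↔ s ∈ Uᶜ
    rw [mem_compl_iff, hUdef, mem_setOf_eq, not_le]
  have hup : ∀ x ∈ U, ∀ y, x ≤ y → y ∈ U := by
    intro x hx y hxy
    exact le_trans (ENNReal.toReal_mono (measure_ne_top μ _)
      (measure_mono (Ioi_subset_Ioi hxy))) hx
  have hne : U.Nonempty := by
    obtain ⟨n, hn⟩ := exists_tail_small μ (ENNReal.ofReal t) (ENNReal.ofReal_pos.2 ht)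
    refine ⟨(n : ℝ), ?_⟩
    show (μ (Ioi ((n:ℝ)))).toReal ≤ t
    exact le_trans (ENNReal.toReal_mono ENNReal.ofReal_ne_top hn.le)
      (ENNReal.toReal_ofReal ht.le).le
  have hbdd : BddBelow U := by
    refine ⟨-1, fun s hs => ?_⟩
    by_contra hneg
    push_neg at hneg
    have h1 : (1 : ℝ≥0∞) ≤ μ (Ioi s) :=
      by rw [← h0]; exact measure_mono (Ici_subset_Ioi.2 (by linarith))
    have h2 : (μ (Ioi s)).toReal = 1 := by
      have := measure_mono (subset_univ (Ioi s)) (μ := μ)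
      rw [measure_univ] at this
      simp [le_antisymm this h1]
    rw [hUdef] at hs
    simp only [mem_setOf_eq, h2] at hs
    linarith
  rcases upward_closed_eq U hne hbdd hup with ⟨hmem, hU⟩ | ⟨hmem, hU⟩
  · rw [hAU, hU]
    rw [prob_compl_eq_one_sub measurableSet_Ici, hν_Ici]
    refine tsub_le_tsub_left (pow_le_pow_left₀ zero_le ?_ k) 1
    rw [measure_Ici_eq_iInf μ (sInf U) 1 one_pos]
    refine le_iInf fun n => ?_
    have hpos : (0:ℝ) < 1 / ((n:ℝ)+1) := by positivity
    have hmem2 : sInf U - 1 / ((n : ℝ) + 1) ∉ U := fun hmm =>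
      absurd (hU.subset hmm) (by simp only [mem_Ici, not_le]; linarith)
    rw [hUdef, mem_setOf_eq, not_le] at hmem2
    exact ((ENNReal.ofReal_lt_iff_lt_toReal ht.le (measure_ne_top μ _)).2 hmem2).le
  · rw [hAU, hU]
    rw [prob_compl_eq_one_sub measurableSet_Ioi, hν_Ioi]
    refine tsub_le_tsub_left (pow_le_pow_left₀ zero_le ?_ k) 1
    rw [hUdef] at hmem
    simp only [mem_setOf_eq, not_le] at hmem
    exact ((ENNReal.ofReal_lt_iff_lt_toReal ht.le (measure_ne_top μ _)).2 hmem).le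

end core

section layercake
variable {μ ν : Measure ℝ} [IsProbabilityMeasure μ] [IsProbabilityMeasure ν] {k d : ℕ}

lemma real_poly_int (hd : 0 < d) (hk : 0 < k) :
    ∫ t in Ioo (0:ℝ) 1, ((1 - t ^ k) * t ^ (d - 1)) = (k : ℝ) / (d * (d + k)) := by
  rw [setIntegral_congr_set Ioo_ae_eq_Ioc, ← intervalIntegral.integral_of_le zero_le_one]
  have hint : ∀ n : ℕ, IntervalIntegrable (fun t : ℝ => t ^ n) volume 0 1 :=
    fun n => intervalIntegral.intervalIntegrable_pow n
  have heq : ∀ t : ℝ, (1 - t ^ k) * t ^ (d - 1) = t ^ (d - 1) - t ^ (k + (d - 1)) := by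
    intro t; rw [pow_add]; ring
  simp only [heq]
  rw [intervalIntegral.integral_sub (hint _) (hint _), integral_pow, integral_pow]
  have hd0 : (d : ℝ) ≠ 0 := Nat.cast_ne_zero.2 hd.ne'
  have hdk0 : ((d : ℝ) + k) ≠ 0 := by positivity
  rw [one_pow, one_pow, zero_pow (by omega : d - 1 + 1 ≠ 0),
    zero_pow (by omega : k + (d - 1) + 1 ≠ 0)]
  have e1 : ((d - 1 : ℕ) : ℝ) + 1 = (d : ℝ) := by
    rw [Nat.cast_sub hd]; ring
  have e2 : ((k + (d - 1) : ℕ) : ℝ) + 1 = (d : ℝ) + k := by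
    push_cast [Nat.cast_sub hd]; ring
  rw [e1, e2, div_sub_div _ _ hd0 hdk0, div_eq_div_iff (by positivity) (by positivity)]
  ring

lemma bridge (hd : 0 < d) {t : ℝ} (ht : t ∈ Ioo (0:ℝ) 1) :
    (1 - ENNReal.ofReal t ^ k) * ENNReal.ofReal (t ^ ((d : ℝ) - 1)) =
      ENNReal.ofReal ((1 - t ^ k) * t ^ (d - 1)) := by
  obtain ⟨ht0, ht1⟩ := ht
  have hknn : (0:ℝ) ≤ 1 - t ^ k := by
    have := pow_le_one₀ ht0.le ht1.le (n := k); linarith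
  have hcast : ((d : ℝ) - 1) = ((d - 1 : ℕ) : ℝ) := by
    rw [Nat.cast_sub hd]; simp
  rw [ENNReal.ofReal_mul hknn, hcast, Real.rpow_natCast]
  congr 1
  rw [← ENNReal.ofReal_pow ht0.le, ← ENNReal.ofReal_one, ← ENNReal.ofReal_sub _ (by positivity)]

lemma g_intOn (hd : 0 < d) (hk : 0 < k) :
    IntegrableOn (fun t : ℝ => (1 - t ^ k) * t ^ (d - 1)) (Ioo 0 1) volume := by
  have hc : Continuous fun t : ℝ => (1 - t ^ k) * t ^ (d - 1) :=
    (continuous_const.sub (continuous_pow k)).mul (continuous_pow (d - 1))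
  exact (hc.integrableOn_Icc (a := 0) (b := 1)).mono_set Ioo_subset_Icc_self

lemma g_lint (hd : 0 < d) (hk : 0 < k) :
    ∫⁻ t in Ioo (0:ℝ) 1, ENNReal.ofReal ((1 - t ^ k) * t ^ (d - 1)) =
      ENNReal.ofReal ((k : ℝ) / (d * (d + k))) := by
  rw [← ofReal_integral_eq_lintegral_ofReal (g_intOn hd hk) ?_, real_poly_int hd hk]
  filter_upwards [self_mem_ae_restrict measurableSet_Ioo] with t ht
  obtain ⟨ht0, ht1⟩ := ht
  have := pow_le_one₀ ht0.le ht1.le (n := k)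
  have : (0:ℝ) ≤ 1 - t ^ k := by linarith
  positivity

lemma int_pow_Ici_ge (hd : 0 < d) (hk : 0 < k)
    (hν_Ici : ∀ a, ν (Ici a) = μ (Ici a) ^ k) (hν_Ioi : ∀ a, ν (Ioi a) = μ (Ioi a) ^ k)
    (h0 : μ (Ici 0) = 1) :
    ENNReal.ofReal ((k : ℝ) / (d + k)) ≤ ∫⁻ s, μ (Ici s) ^ d ∂ν := by
  have fanti : Antitone fun s : ℝ => (μ (Ici s)).toReal := fun x y hxy =>
    ENNReal.toReal_mono (measure_ne_top μ _) (measure_mono (Ici_subset_Ici.2 hxy))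
  have key := lintegral_rpow_eq_lintegral_meas_lt_mul ν
    (f := fun s => (μ (Ici s)).toReal) (Filter.Eventually.of_forall fun s => ENNReal.toReal_nonneg)
    fanti.measurable.aemeasurable (p := (d : ℝ)) (by exact_mod_cast hd)
  have hlhs : ∀ s : ℝ, ENNReal.ofReal ((μ (Ici s)).toReal ^ (d:ℝ)) = μ (Ici s) ^ d := by
    intro s
    rw [Real.rpow_natCast, ENNReal.ofReal_pow ENNReal.toReal_nonneg,
      ENNReal.ofReal_toReal (measure_ne_top μ _)]
  simp only [hlhs] at key
  rw [key]
  calc ENNReal.ofReal ((k:ℝ) / (d + k))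
      = ENNReal.ofReal (d : ℝ) * ENNReal.ofReal ((k:ℝ) / (d * (d + k))) := by
        rw [← ENNReal.ofReal_mul (by positivity)]
        congr 1
        have hd0 : (d:ℝ) ≠ 0 := Nat.cast_ne_zero.2 hd.ne'
        have hdk0 : ((d:ℝ) + k) ≠ 0 := by positivity
        field_simp
    _ ≤ ENNReal.ofReal (d : ℝ) *
        ∫⁻ t in Ioi (0:ℝ), ν {s | t < (μ (Ici s)).toReal} * ENNReal.ofReal (t ^ ((d:ℝ) - 1)) := by
        refine mul_le_mul_right ?_ _
        rw [← g_lint hd hk]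
        have e1 : ∫⁻ t in Ioo (0:ℝ) 1, ENNReal.ofReal ((1 - t ^ k) * t ^ (d - 1)) =
            ∫⁻ t in Ioo (0:ℝ) 1, (1 - ENNReal.ofReal t ^ k) * ENNReal.ofReal (t ^ ((d:ℝ) - 1)) :=
          setLIntegral_congr_fun measurableSet_Ioo
            (fun t ht => (bridge hd ht).symm)
        rw [e1]
        have e2 : ∫⁻ t in Ioo (0:ℝ) 1,
              (1 - ENNReal.ofReal t ^ k) * ENNReal.ofReal (t ^ ((d:ℝ) - 1)) ≤
            ∫⁻ t in Ioo (0:ℝ) 1,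
              ν {s | t < (μ (Ici s)).toReal} * ENNReal.ofReal (t ^ ((d:ℝ) - 1)) := by
          refine lintegral_mono_ae ?_
          filter_upwards [self_mem_ae_restrict measurableSet_Ioo] with t ht
          exact mul_le_mul_left (nu_meas_lt_Ici_ge hk hν_Ici hν_Ioi h0 ht.1 ht.2) _
        exact e2.trans (lintegral_mono_set Ioo_subset_Ioi_self)

lemma int_pow_Ioi_le (hd : 0 < d) (hk : 0 < k)
    (hν_Ici : ∀ a, ν (Ici a) = μ (Ici a) ^ k) (hν_Ioi : ∀ a, ν (Ioi a) = μ (Ioi a) ^ k)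
    (h0 : μ (Ici 0) = 1) :
    ∫⁻ s, μ (Ioi s) ^ d ∂ν ≤ ENNReal.ofReal ((k : ℝ) / (d + k)) := by
  have fanti : Antitone fun s : ℝ => (μ (Ioi s)).toReal := fun x y hxy =>
    ENNReal.toReal_mono (measure_ne_top μ _) (measure_mono (Ioi_subset_Ioi hxy))
  have key := lintegral_rpow_eq_lintegral_meas_lt_mul ν
    (f := fun s => (μ (Ioi s)).toReal) (Filter.Eventually.of_forall fun s => ENNReal.toReal_nonneg)
    fanti.measurable.aemeasurable (p := (d : ℝ)) (by exact_mod_cast hd)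
  have hlhs : ∀ s : ℝ, ENNReal.ofReal ((μ (Ioi s)).toReal ^ (d:ℝ)) = μ (Ioi s) ^ d := by
    intro s
    rw [Real.rpow_natCast, ENNReal.ofReal_pow ENNReal.toReal_nonneg,
      ENNReal.ofReal_toReal (measure_ne_top μ _)]
  simp only [hlhs] at key
  rw [key]
  calc ENNReal.ofReal (d:ℝ) *
        ∫⁻ t in Ioi (0:ℝ), ν {s | t < (μ (Ioi s)).toReal} * ENNReal.ofReal (t ^ ((d:ℝ) - 1))
      ≤ ENNReal.ofReal (d:ℝ) *
        ∫⁻ t in Ioo (0:ℝ) 1, ENNReal.ofReal ((1 - t ^ k) * t ^ (d - 1)) := by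
        refine mul_le_mul_right ?_ _
        have hbnd : ∀ t ∈ Ioi (0:ℝ),
            ν {s | t < (μ (Ioi s)).toReal} * ENNReal.ofReal (t ^ ((d:ℝ) - 1)) ≤
            (Ioo (0:ℝ) 1).indicator
              (fun t => ENNReal.ofReal ((1 - t ^ k) * t ^ (d - 1))) t := by
          intro t ht
          by_cases ht1 : t < 1
          · have htm : t ∈ Ioo (0:ℝ) 1 := ⟨ht, ht1⟩
            rw [indicator_of_mem htm, ← bridge hd htm]
            exact mul_le_mul_left (nu_meas_lt_Ioi_le hk hν_Ici hν_Ioi h0 ht ht1) _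
          · push_neg at ht1
            have hempty : {s | t < (μ (Ioi s)).toReal} = (∅ : Set ℝ) := by
              ext s
              simp only [mem_setOf_eq, mem_empty_iff_false, iff_false, not_lt]
              calc (μ (Ioi s)).toReal ≤ (μ univ).toReal :=
                    ENNReal.toReal_mono (measure_ne_top μ _) (measure_mono (subset_univ _))
                _ = 1 := by simp
                _ ≤ t := ht1
            rw [hempty]
            simp
        calc ∫⁻ t in Ioi (0:ℝ), ν {s | t < (μ (Ioi s)).toReal} * ENNReal.ofReal (t ^ ((d:ℝ) - 1))
            ≤ ∫⁻ t in Ioi (0:ℝ), (Ioo (0:ℝ) 1).indicator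
                (fun t => ENNReal.ofReal ((1 - t ^ k) * t ^ (d - 1))) t := by
              refine lintegral_mono_ae ?_
              filter_upwards [self_mem_ae_restrict measurableSet_Ioi] with t ht
              exact hbnd t ht
          _ = ∫⁻ t in Ioo (0:ℝ) 1 ∩ Ioi (0:ℝ),
                ENNReal.ofReal ((1 - t ^ k) * t ^ (d - 1)) := by
              rw [lintegral_indicator measurableSet_Ioo, Measure.restrict_restrict measurableSet_Ioo]
          _ = ∫⁻ t in Ioo (0:ℝ) 1, ENNReal.ofReal ((1 - t ^ k) * t ^ (d - 1)) := by
              rw [inter_eq_self_of_subset_left Ioo_subset_Ioi_self]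
    _ = ENNReal.ofReal ((k : ℝ) / (d + k)) := by
        rw [g_lint hd hk, ← ENNReal.ofReal_mul (by positivity)]
        congr 1
        have hd0 : (d:ℝ) ≠ 0 := Nat.cast_ne_zero.2 hd.ne'
        have hdk0 : ((d:ℝ) + k) ≠ 0 := by positivity
        field_simp

end layercake

section main
variable {μ ν : Measure ℝ} [IsProbabilityMeasure μ] [IsProbabilityMeasure ν] {k d : ℕ}

lemma q_meas (μ : Measure ℝ) [IsProbabilityMeasure μ] : Measurable fun t : ℝ => μ (Ioi t) :=
  Antitone.measurable fun x y hxy => measure_mono (Ioi_subset_Ioi hxy)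

lemma r_meas (μ : Measure ℝ) [IsProbabilityMeasure μ] : Measurable fun t : ℝ => μ (Ici t) :=
  Antitone.measurable fun x y hxy => measure_mono (Ici_subset_Ici.2 hxy)

lemma nwu_ext
    (hnwu : ∀ t₁ t₂ : ℝ, 0 ≤ t₁ → 0 ≤ t₂ → μ (Ioi t₁) * μ (Ioi t₂) ≤ μ (Ioi (t₁ + t₂)))
    (h0 : μ (Ici 0) = 1) (s u : ℝ) (hs : 0 ≤ s) (hu : 0 ≤ u) :
    μ (Ici s) * μ (Ioi u) ≤ μ (Ioi (s + u)) := by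
  rcases eq_or_lt_of_le hs with hs0 | hs0
  · rw [← hs0, h0, one_mul, zero_add]
  · have hc : 0 < s / 2 := by linarith
    rw [measure_Ioi_eq_iSup_Ioi μ u (s/2) hc, ENNReal.mul_iSup]
    refine iSup_le fun n => ?_
    have hpos : 0 < (s/2) / ((n:ℝ) + 1) := by positivity
    have hlee : (s/2) / ((n:ℝ) + 1) ≤ s/2 := by
      apply div_le_self hc.le
      have : (0:ℝ) ≤ (n:ℝ) := Nat.cast_nonneg n
      linarith
    have h1 : μ (Ici s) ≤ μ (Ioi (s - (s/2) / ((n:ℝ)+1))) :=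
      measure_mono (Ici_subset_Ioi.2 (by linarith))
    calc μ (Ici s) * μ (Ioi (u + (s/2) / ((n:ℝ)+1)))
        ≤ μ (Ioi (s - (s/2)/((n:ℝ)+1))) * μ (Ioi (u + (s/2)/((n:ℝ)+1))) :=
          mul_le_mul_left h1 _
      _ ≤ μ (Ioi ((s - (s/2)/((n:ℝ)+1)) + (u + (s/2)/((n:ℝ)+1)))) :=
          hnwu _ _ (by linarith) (by linarith)
      _ = μ (Ioi (s + u)) := by congr 1; ring

lemma L_ne_top (hfin : ∫⁻ t in Ioi (0:ℝ), μ (Ioi t) ≠ ∞) (hd : 0 < d) :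
    ∫⁻ t in Ioi (0:ℝ), μ (Ioi t) ^ d ≠ ∞ := by
  refine ne_top_of_le_ne_top hfin (lintegral_mono fun t => ?_)
  calc μ (Ioi t) ^ d ≤ μ (Ioi t) ^ 1 :=
        pow_le_pow_of_le_one zero_le prob_le_one hd
    _ = μ (Ioi t) := pow_one _

lemma fubini_eq (hk : 0 < k)
    (hν_Ioi : ∀ a, ν (Ioi a) = μ (Ioi a) ^ k) :
    ∫⁻ t in Ioi (0:ℝ), (μ (Ioi t) ^ d - μ (Ioi t) ^ (d + k)) =
      ∫⁻ s, (∫⁻ t in Ici s ∩ Ioi (0:ℝ), μ (Ioi t) ^ d) ∂ν := by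
  have hset : MeasurableSet {p : ℝ × ℝ | p.2 ≤ p.1} := measurableSet_le measurable_snd measurable_fst
  set F : ℝ × ℝ → ℝ≥0∞ :=
    fun p => μ (Ioi p.1) ^ d * ({p : ℝ × ℝ | p.2 ≤ p.1}.indicator (fun _ => 1) p) with hF
  have hFmeas : Measurable F :=
    (((q_meas μ).comp measurable_fst).pow_const d).mul (measurable_const.indicator hset)
  have step1 : ∀ t : ℝ, μ (Ioi t) ^ d - μ (Ioi t) ^ (d + k) = ∫⁻ s, F (t, s) ∂ν := by
    intro t
    have h1 : (fun s : ℝ => F (t, s)) = fun s => μ (Ioi t) ^ d * (Iic t).indicator (fun _ => 1) s := by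
      funext s
      by_cases h : s ≤ t <;> simp [hF, Set.indicator_apply, h]
    rw [h1, lintegral_const_mul _ (measurable_const.indicator measurableSet_Iic),
      lintegral_indicator measurableSet_Iic, setLIntegral_one]
    have h2 : ν (Iic t) = 1 - μ (Ioi t) ^ k := by
      rw [← compl_Ioi, prob_compl_eq_one_sub measurableSet_Ioi, hν_Ioi]
    rw [h2, ENNReal.mul_sub fun _ _ => ENNReal.pow_ne_top (measure_ne_top μ _), mul_one,
      ← pow_add]
  have step2 : ∀ s : ℝ, ∫⁻ t in Ioi (0:ℝ), F (t, s) = ∫⁻ t in Ici s ∩ Ioi (0:ℝ), μ (Ioi t) ^ d := by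
    intro s
    have h1 : (fun t : ℝ => F (t, s)) = (Ici s).indicator (fun t => μ (Ioi t) ^ d) := by
      funext t
      by_cases h : s ≤ t <;> simp [hF, Set.indicator_apply, h]
    rw [h1, lintegral_indicator measurableSet_Ici, Measure.restrict_restrict measurableSet_Ici]
  calc ∫⁻ t in Ioi (0:ℝ), (μ (Ioi t) ^ d - μ (Ioi t) ^ (d + k))
      = ∫⁻ t in Ioi (0:ℝ), ∫⁻ s, F (t, s) ∂ν := by
        exact lintegral_congr fun t => step1 t
    _ = ∫⁻ s, (∫⁻ t in Ioi (0:ℝ), F (t, s)) ∂ν :=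
        lintegral_lintegral_swap hFmeas.aemeasurable
    _ = ∫⁻ s, (∫⁻ t in Ici s ∩ Ioi (0:ℝ), μ (Ioi t) ^ d) ∂ν :=
        lintegral_congr fun s => step2 s

lemma lint_sub_eq (hk : 0 < k) (hd : 0 < d) (hfin : ∫⁻ t in Ioi (0:ℝ), μ (Ioi t) ≠ ∞) :
    ∫⁻ t in Ioi (0:ℝ), (μ (Ioi t) ^ d - μ (Ioi t) ^ (d + k)) =
      (∫⁻ t in Ioi (0:ℝ), μ (Ioi t) ^ d) - ∫⁻ t in Ioi (0:ℝ), μ (Ioi t) ^ (d + k) := by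
  refine lintegral_sub ((q_meas μ).pow_const _) (L_ne_top hfin (by omega)) ?_
  refine Filter.Eventually.of_forall fun t => ?_
  exact pow_le_pow_of_le_one zero_le prob_le_one (by omega)

lemma translate_lint (s : ℝ) (f : ℝ → ℝ≥0∞) (hf : Measurable f) :
    ∫⁻ t in Ioi s, f t = ∫⁻ u in Ioi (0:ℝ), f (u + s) := by
  have hmap : volume.restrict (Ioi s) =
      Measure.map (fun u : ℝ => u + s) (volume.restrict (Ioi (0:ℝ))) := by
    have hpre : (fun u : ℝ => u + s) ⁻¹' Ioi s = Ioi (0:ℝ) := by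
      ext u; simp [mem_Ioi]
    rw [← hpre, ← Measure.restrict_map (measurable_add_const s) measurableSet_Ioi,
      map_add_right_eq_self volume s]
  rw [hmap, lintegral_map hf (measurable_add_const s)]

lemma inner_ge_nwu
    (hnwu : ∀ t₁ t₂ : ℝ, 0 ≤ t₁ → 0 ≤ t₂ → μ (Ioi t₁) * μ (Ioi t₂) ≤ μ (Ioi (t₁ + t₂)))
    (h0 : μ (Ici 0) = 1) {s : ℝ} (hs : 0 ≤ s) :
    μ (Ici s) ^ d * ∫⁻ t in Ioi (0:ℝ), μ (Ioi t) ^ d ≤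
      ∫⁻ t in Ici s ∩ Ioi (0:ℝ), μ (Ioi t) ^ d := by
  have hsub : Ioi s ⊆ Ici s ∩ Ioi (0:ℝ) := fun t ht => ⟨le_of_lt (mem_Ioi.1 ht), mem_Ioi.2 (lt_of_le_of_lt hs (mem_Ioi.1 ht))⟩
  refine le_trans ?_ (lintegral_mono_set hsub)
  rw [translate_lint s _ ((q_meas μ).pow_const d), ← lintegral_const_mul _ ((q_meas μ).pow_const d)]
  refine lintegral_mono_ae ?_
  filter_upwards [self_mem_ae_restrict measurableSet_Ioi] with u hu
  calc μ (Ici s) ^ d * μ (Ioi u) ^ d = (μ (Ici s) * μ (Ioi u)) ^ d := (mul_pow _ _ d).symm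
    _ ≤ μ (Ioi (s + u)) ^ d := pow_le_pow_left₀ zero_le (nwu_ext hnwu h0 s u hs (le_of_lt hu)) d
    _ = μ (Ioi (u + s)) ^ d := by rw [add_comm]

lemma inner_le_nbu
    (hnbu : ∀ t₁ t₂ : ℝ, 0 ≤ t₁ → 0 ≤ t₂ → μ (Ioi (t₁ + t₂)) ≤ μ (Ioi t₁) * μ (Ioi t₂))
    {s : ℝ} (hs : 0 ≤ s) :
    ∫⁻ t in Ici s ∩ Ioi (0:ℝ), μ (Ioi t) ^ d ≤
      μ (Ioi s) ^ d * ∫⁻ t in Ioi (0:ℝ), μ (Ioi t) ^ d := by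
  refine le_trans (lintegral_mono_set inter_subset_left) ?_
  rw [← Measure.restrict_congr_set Ioi_ae_eq_Ici,
    translate_lint s _ ((q_meas μ).pow_const d), ← lintegral_const_mul _ ((q_meas μ).pow_const d)]
  refine lintegral_mono_ae ?_
  filter_upwards [self_mem_ae_restrict measurableSet_Ioi] with u hu
  calc μ (Ioi (u + s)) ^ d = μ (Ioi (s + u)) ^ d := by rw [add_comm]
    _ ≤ (μ (Ioi s) * μ (Ioi u)) ^ d :=
        pow_le_pow_left₀ zero_le (hnbu s u hs (le_of_lt hu)) d
    _ = μ (Ioi s) ^ d * μ (Ioi u) ^ d := mul_pow _ _ d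

end main

section combine
variable {μ ν : Measure ℝ} [IsProbabilityMeasure μ] [IsProbabilityMeasure ν] {k d : ℕ}

lemma cast_mul_ofReal (hd : 0 < d) (hk : 0 < k) :
    ((d + k : ℕ) : ℝ≥0∞) * ENNReal.ofReal ((k:ℝ) / (d + k)) = (k : ℕ) := by
  rw [← ENNReal.ofReal_natCast (d + k), ← ENNReal.ofReal_mul (Nat.cast_nonneg _),
    ← ENNReal.ofReal_natCast k]
  congr 1
  have hdk0 : ((d:ℝ) + k) ≠ 0 := by positivity
  push_cast
  field_simp

lemma key_ineq_nwu (hd : 0 < d) (hk : 0 < k)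
    (hν_Ici : ∀ a, ν (Ici a) = μ (Ici a) ^ k) (hν_Ioi : ∀ a, ν (Ioi a) = μ (Ioi a) ^ k)
    (h0 : μ (Ici 0) = 1) (hfin : ∫⁻ t in Ioi (0:ℝ), μ (Ioi t) ≠ ∞)
    (hnwu : ∀ t₁ t₂ : ℝ, 0 ≤ t₁ → 0 ≤ t₂ → μ (Ioi t₁) * μ (Ioi t₂) ≤ μ (Ioi (t₁ + t₂))) :
    ((d + k : ℕ) : ℝ≥0∞) * ∫⁻ t in Ioi (0:ℝ), μ (Ioi t) ^ (d + k) ≤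
      ((d : ℕ) : ℝ≥0∞) * ∫⁻ t in Ioi (0:ℝ), μ (Ioi t) ^ d := by
  set A := ∫⁻ t in Ioi (0:ℝ), μ (Ioi t) ^ d with hA
  set B := ∫⁻ t in Ioi (0:ℝ), μ (Ioi t) ^ (d + k) with hB
  set c := ENNReal.ofReal ((k:ℝ) / (d + k)) with hc
  have hBA : B ≤ A := lintegral_mono fun t =>
    pow_le_pow_of_le_one zero_le prob_le_one (by omega)
  have hAtop : A ≠ ∞ := L_ne_top hfin hd
  have hν0 : ∀ᵐ s ∂ν, 0 ≤ s := by
    have : ν (Iio 0) = 0 := by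
      have h1 : ν (Iio 0) = 1 - ν (Ici 0) := by
        rw [← compl_Ici, prob_compl_eq_one_sub measurableSet_Ici]
      rw [h1, hν_Ici 0, h0, one_pow, tsub_self]
    filter_upwards [measure_eq_zero_iff_ae_notMem.mp this] with s hs
    simpa using hs
  have hkey : A - B = ∫⁻ s, (∫⁻ t in Ici s ∩ Ioi (0:ℝ), μ (Ioi t) ^ d) ∂ν := by
    rw [← lint_sub_eq hk hd hfin, fubini_eq hk hν_Ioi]
  have hge : A * c ≤ A - B := by
    rw [hkey]
    calc A * c ≤ A * ∫⁻ s, μ (Ici s) ^ d ∂ν :=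
          mul_le_mul_right (int_pow_Ici_ge hd hk hν_Ici hν_Ioi h0) _
      _ = ∫⁻ s, μ (Ici s) ^ d * A ∂ν := by
          rw [lintegral_mul_const _ ((r_meas μ).pow_const d), mul_comm]
      _ ≤ ∫⁻ s, (∫⁻ t in Ici s ∩ Ioi (0:ℝ), μ (Ioi t) ^ d) ∂ν := by
          refine lintegral_mono_ae ?_
          filter_upwards [hν0] with s hs
          exact inner_ge_nwu hnwu h0 hs
  have hsum : B + A * c ≤ A := by
    calc B + A * c ≤ B + (A - B) := add_le_add_right hge B
      _ = A := add_tsub_cancel_of_le hBA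
  have hmul : ((d+k:ℕ) : ℝ≥0∞) * (B + A * c) ≤ ((d+k:ℕ) : ℝ≥0∞) * A := mul_le_mul_right hsum _
  rw [mul_add, mul_comm A c, ← mul_assoc, cast_mul_ofReal hd hk] at hmul
  have hcast : ((d + k : ℕ) : ℝ≥0∞) = ((d:ℕ) : ℝ≥0∞) + ((k:ℕ) : ℝ≥0∞) := by push_cast; ring
  have hkA : ((k:ℕ) : ℝ≥0∞) * A ≠ ∞ := ENNReal.mul_ne_top (ENNReal.natCast_ne_top k) hAtop
  rw [hcast, add_mul, add_mul] at hmul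
  rw [ENNReal.add_le_add_iff_right hkA] at hmul
  rw [hcast, add_mul]
  exact hmul

lemma key_ineq_nbu (hd : 0 < d) (hk : 0 < k)
    (hν_Ici : ∀ a, ν (Ici a) = μ (Ici a) ^ k) (hν_Ioi : ∀ a, ν (Ioi a) = μ (Ioi a) ^ k)
    (h0 : μ (Ici 0) = 1) (hfin : ∫⁻ t in Ioi (0:ℝ), μ (Ioi t) ≠ ∞)
    (hnbu : ∀ t₁ t₂ : ℝ, 0 ≤ t₁ → 0 ≤ t₂ → μ (Ioi (t₁ + t₂)) ≤ μ (Ioi t₁) * μ (Ioi t₂)) :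
    ((d : ℕ) : ℝ≥0∞) * ∫⁻ t in Ioi (0:ℝ), μ (Ioi t) ^ d ≤
      ((d + k : ℕ) : ℝ≥0∞) * ∫⁻ t in Ioi (0:ℝ), μ (Ioi t) ^ (d + k) := by
  set A := ∫⁻ t in Ioi (0:ℝ), μ (Ioi t) ^ d with hA
  set B := ∫⁻ t in Ioi (0:ℝ), μ (Ioi t) ^ (d + k) with hB
  set c := ENNReal.ofReal ((k:ℝ) / (d + k)) with hc
  have hAtop : A ≠ ∞ := L_ne_top hfin hd
  have hν0 : ∀ᵐ s ∂ν, 0 ≤ s := by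
    have : ν (Iio 0) = 0 := by
      have h1 : ν (Iio 0) = 1 - ν (Ici 0) := by
        rw [← compl_Ici, prob_compl_eq_one_sub measurableSet_Ici]
      rw [h1, hν_Ici 0, h0, one_pow, tsub_self]
    filter_upwards [measure_eq_zero_iff_ae_notMem.mp this] with s hs
    simpa using hs
  have hkey : A - B = ∫⁻ s, (∫⁻ t in Ici s ∩ Ioi (0:ℝ), μ (Ioi t) ^ d) ∂ν := by
    rw [← lint_sub_eq hk hd hfin, fubini_eq hk hν_Ioi]
  have hle : A - B ≤ A * c := by
    rw [hkey]
    calc ∫⁻ s, (∫⁻ t in Ici s ∩ Ioi (0:ℝ), μ (Ioi t) ^ d) ∂ν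
        ≤ ∫⁻ s, μ (Ioi s) ^ d * A ∂ν := by
          refine lintegral_mono_ae ?_
          filter_upwards [hν0] with s hs
          exact inner_le_nbu hnbu hs
      _ = (∫⁻ s, μ (Ioi s) ^ d ∂ν) * A := lintegral_mul_const _ ((q_meas μ).pow_const d)
      _ ≤ c * A := mul_le_mul_left (int_pow_Ioi_le hd hk hν_Ici hν_Ioi h0) _
      _ = A * c := mul_comm _ _
  have hsum : A ≤ A * c + B := tsub_le_iff_right.mp hle
  have hmul : ((d+k:ℕ) : ℝ≥0∞) * A ≤ ((d+k:ℕ) : ℝ≥0∞) * (A * c + B) := mul_le_mul_right hsum _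
  rw [mul_add, mul_comm A c, ← mul_assoc, cast_mul_ofReal hd hk] at hmul
  have hcast : ((d + k : ℕ) : ℝ≥0∞) = ((d:ℕ) : ℝ≥0∞) + ((k:ℕ) : ℝ≥0∞) := by push_cast; ring
  have hkA : ((k:ℕ) : ℝ≥0∞) * A ≠ ∞ := ENNReal.mul_ne_top (ENNReal.natCast_ne_top k) hAtop
  rw [hcast, add_mul] at hmul
  -- hmul : d*A + k*A ≤ k*A + (d+k cast sum split?) careful
  rw [add_comm (((k:ℕ) : ℝ≥0∞) * A) _] at hmul
  rw [ENNReal.add_le_add_iff_right hkA] at hmul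
  rw [hcast]
  exact hmul

end combine

section glue

lemma exists_nu (k : ℕ) (hk : 0 < k) (μ : Measure ℝ) [IsProbabilityMeasure μ] :
    ∃ ν : Measure ℝ, IsProbabilityMeasure ν ∧ (∀ a, ν (Ici a) = μ (Ici a) ^ k) ∧
      ∀ a, ν (Ioi a) = μ (Ioi a) ^ k := by
  haveI : Nonempty (Fin k) := ⟨⟨0, hk⟩⟩
  set m : (Fin k → ℝ) → ℝ := fun x => ⨅ i, x i with hm
  have hmeas : Measurable m := measurable_finInf _ (fun i => measurable_pi_apply i)
  refine ⟨(Measure.pi fun _ : Fin k => μ).map m, Measure.isProbabilityMeasure_map hmeas.aemeasurable,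
    fun a => ?_, fun a => ?_⟩
  · rw [Measure.map_apply hmeas measurableSet_Ici]
    have hpre : m ⁻¹' Ici a = Set.pi univ fun _ : Fin k => Ici a := by
      ext x
      simp only [mem_preimage, mem_Ici, mem_pi, mem_univ, forall_true_left, hm]
      rw [le_finInf_iff]
    rw [hpre, Measure.pi_pi]
    simp
  · rw [Measure.map_apply hmeas measurableSet_Ioi]
    have hpre : m ⁻¹' Ioi a = Set.pi univ fun _ : Fin k => Ioi a := by
      ext x
      simp only [mem_preimage, mem_Ioi, mem_pi, mem_univ, forall_true_left, hm]
      rw [lt_finInf_iff]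
    rw [hpre, Measure.pi_pi]
    simp

lemma exp_min_eq {Ω : Type*} [MeasurableSpace Ω] (P : Measure Ω) [IsProbabilityMeasure P]
    (μ : Measure ℝ) [IsProbabilityMeasure μ] (n : ℕ) [Nonempty (Fin n)]
    (Z : Fin n → Ω → ℝ) (hmeas : ∀ i, Measurable (Z i))
    (hnn : ∀ᵐ ω ∂P, ∀ i, 0 ≤ Z i ω)
    (hint : Integrable (Z (Classical.arbitrary _)) P)
    (htails : ∀ t : ℝ, P {ω | t < ⨅ i, Z i ω} = μ (Ioi t) ^ n) :
    ∫ ω, (⨅ i, Z i ω) ∂P = (∫⁻ t in Ioi (0:ℝ), μ (Ioi t) ^ n).toReal := by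
  set m : Ω → ℝ := fun ω => ⨅ i, Z i ω with hm
  have hm_meas : Measurable m := measurable_finInf Z hmeas
  have hm_nn : 0 ≤ᵐ[P] m := by
    filter_upwards [hnn] with ω hω
    exact (le_finInf_iff _ 0).2 hω
  have hm_int : Integrable m P := by
    refine hint.mono hm_meas.aestronglyMeasurable ?_
    filter_upwards [hnn] with ω hω
    rw [Real.norm_eq_abs, Real.norm_eq_abs, abs_of_nonneg ((le_finInf_iff _ 0).2 hω),
      abs_of_nonneg (hω _)]
    exact finInf_le _ _
  rw [show ∫ ω, (⨅ i, Z i ω) ∂P = ∫ ω, m ω ∂P from rfl,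
    hm_int.integral_eq_integral_meas_lt hm_nn]
  have hcong : EqOn (fun t => P.real {ω | t < m ω})
      (fun t => ((μ (Ioi t)) ^ n).toReal) (Ioi (0:ℝ)) := fun t _ => by
    simp only [hm, measureReal_def, htails t]
  rw [setIntegral_congr_fun measurableSet_Ioi hcong]
  rw [integral_toReal (((q_meas μ).pow_const n).aemeasurable.restrict) ?_]
  filter_upwards with t
  exact (ENNReal.pow_ne_top (measure_ne_top μ _)).lt_top

end glue

open ProbabilityTheory in
theorem agg_aux_main
    {Ω : Type*} [MeasurableSpace Ω] (P : Measure Ω) [IsProbabilityMeasure P]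
    (S : Ω → ℝ) (hS : ∀ ω, 0 ≤ S ω) (hSint : Integrable S P)
    (Fbar : ℝ → ℝ) (hFbar : ∀ t, Fbar t = (P {ω | t < S ω}).toReal)
    (N : ℕ) (hN : 0 < N) (Y : Fin N → Ω → ℝ)
    (hYmeas : ∀ i, Measurable (Y i))
    (hindep : iIndepFun Y P)
    (hid : ∀ i, IdentDistrib (Y i) S P P)
    (d : ℕ) (hd1 : 1 ≤ d) (hdN : d ≤ N) :
    ((∀ t₁ t₂ : ℝ, 0 ≤ t₁ → 0 ≤ t₂ → Fbar (t₁ + t₂) ≥ Fbar t₁ * Fbar t₂) →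
      (N : ℝ) * ∫ ω, (⨅ i : Fin N, Y i ω) ∂P ≤
        (d : ℝ) * ∫ ω, (⨅ i : Fin d, Y (Fin.castLE hdN i) ω) ∂P) ∧
    ((∀ t₁ t₂ : ℝ, 0 ≤ t₁ → 0 ≤ t₂ → Fbar (t₁ + t₂) ≤ Fbar t₁ * Fbar t₂) →
      (d : ℝ) * ∫ ω, (⨅ i : Fin d, Y (Fin.castLE hdN i) ω) ∂P ≤
        (N : ℝ) * ∫ ω, (⨅ i : Fin N, Y i ω) ∂P) := by
  haveI hne_N : Nonempty (Fin N) := ⟨⟨0, hN⟩⟩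
  haveI hne_d : Nonempty (Fin d) := ⟨⟨0, hd1⟩⟩
  have hSae : AEMeasurable S P := (hid ⟨0, hN⟩).aemeasurable_snd
  set μ : Measure ℝ := P.map S with hμ
  haveI : IsProbabilityMeasure μ := Measure.isProbabilityMeasure_map hSae
  have hμIoi : ∀ t, μ (Ioi t) = P {ω | t < S ω} := fun t => by
    rw [hμ, Measure.map_apply_of_aemeasurable hSae measurableSet_Ioi]
    rfl
  have h0 : μ (Ici 0) = 1 := by
    have huniv : S ⁻¹' Ici 0 = univ := eq_univ_of_forall fun ω => hS ω
    rw [hμ, Measure.map_apply_of_aemeasurable hSae measurableSet_Ici, huniv, measure_univ]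
  have hfin : ∫⁻ t in Ioi (0:ℝ), μ (Ioi t) ≠ ∞ := by
    have key := lintegral_eq_lintegral_meas_lt P (Filter.Eventually.of_forall hS) hSae
    have h1 : ∫⁻ ω, ENNReal.ofReal (S ω) ∂P ≠ ∞ := hSint.lintegral_lt_top.ne
    rw [key] at h1
    have : ∀ t : ℝ, P {a | t < S a} = μ (Ioi t) := fun t => (hμIoi t).symm
    rwa [lintegral_congr fun t => this t] at h1
  have htail : ∀ (i : Fin N) (t : ℝ), P (Y i ⁻¹' Ioi t) = μ (Ioi t) := fun i t => by
    rw [(hid i).measure_mem_eq measurableSet_Ioi, hμ,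
      Measure.map_apply_of_aemeasurable hSae measurableSet_Ioi]
  have hprod : ∀ (s : Finset (Fin N)) (t : ℝ),
      P (⋂ i ∈ s, Y i ⁻¹' Ioi t) = μ (Ioi t) ^ s.card := fun s t => by
    rw [hindep.measure_inter_preimage_eq_mul s (fun i _ => measurableSet_Ioi),
      Finset.prod_congr rfl fun i _ => htail i t, Finset.prod_const]
  have hminN : ∀ t : ℝ, P {ω | t < ⨅ i : Fin N, Y i ω} = μ (Ioi t) ^ N := by
    intro t
    have hset : {ω | t < ⨅ i : Fin N, Y i ω} = ⋂ i ∈ Finset.univ, Y i ⁻¹' Ioi t := by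
      ext ω
      simp only [mem_setOf_eq, mem_iInter, Finset.mem_univ, forall_true_left, mem_preimage,
        mem_Ioi]
      exact lt_finInf_iff _ t
    rw [hset, hprod, Finset.card_univ, Fintype.card_fin]
  have hmind : ∀ t : ℝ,
      P {ω | t < ⨅ i : Fin d, Y (Fin.castLE hdN i) ω} = μ (Ioi t) ^ d := by
    intro t
    set e : Fin d ↪ Fin N := ⟨Fin.castLE hdN, (Fin.strictMono_castLE hdN).injective⟩ with he
    have hset : {ω | t < ⨅ i : Fin d, Y (Fin.castLE hdN i) ω} =
        ⋂ i ∈ Finset.univ.map e, Y i ⁻¹' Ioi t := by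
      ext ω
      simp only [mem_setOf_eq, mem_iInter, Finset.mem_map, Finset.mem_univ, true_and,
        mem_preimage, mem_Ioi, forall_exists_index]
      rw [lt_finInf_iff]
      constructor
      · rintro h i j rfl
        exact h j
      · intro h j
        exact h (e j) j rfl
    rw [hset, hprod, Finset.card_map, Finset.card_univ, Fintype.card_fin]
  have hYnn : ∀ᵐ ω ∂P, ∀ i, 0 ≤ Y i ω := by
    rw [ae_all_iff]
    intro i
    have h1 : P (Y i ⁻¹' Iio 0) = 0 := by
      rw [(hid i).measure_mem_eq measurableSet_Iio]
      have : S ⁻¹' Iio 0 = ∅ := by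
        ext ω; simp only [mem_preimage, mem_Iio, mem_empty_iff_false, iff_false, not_lt]
        exact hS ω
      rw [this, measure_empty]
    filter_upwards [measure_eq_zero_iff_ae_notMem.mp h1] with ω hω
    simpa using hω
  have hYint : ∀ i, Integrable (Y i) P := fun i => (hid i).integrable_iff.mpr hSint
  have hexpN : ∫ ω, (⨅ i : Fin N, Y i ω) ∂P =
      (∫⁻ t in Ioi (0:ℝ), μ (Ioi t) ^ N).toReal :=
    exp_min_eq P μ N Y hYmeas hYnn (hYint _) hminN
  have hexpd : ∫ ω, (⨅ i : Fin d, Y (Fin.castLE hdN i) ω) ∂P =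
      (∫⁻ t in Ioi (0:ℝ), μ (Ioi t) ^ d).toReal :=
    exp_min_eq P μ d (fun i => Y (Fin.castLE hdN i)) (fun i => hYmeas _)
      (by filter_upwards [hYnn] with ω hω i; exact hω _) (hYint _) hmind
  have hFbar_eq : ∀ t, μ (Ioi t) = ENNReal.ofReal (Fbar t) := fun t => by
    rw [hFbar t, ← hμIoi t, ENNReal.ofReal_toReal (measure_ne_top μ _)]
  have hFbar_nn : ∀ t, 0 ≤ Fbar t := fun t => by rw [hFbar t]; exact ENNReal.toReal_nonneg
  have hd0 : 0 < d := hd1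
  rcases eq_or_lt_of_le hdN with heq | hlt
  · -- trivial case d = N
    subst heq
    have hcast : ∀ i : Fin d, Fin.castLE hdN i = i := fun i => Fin.ext (by simp)
    simp only [hcast]
    exact ⟨fun _ => le_refl _, fun _ => le_refl _⟩
  · have hk : 0 < N - d := by omega
    have hNdk : d + (N - d) = N := by omega
    obtain ⟨ν, hνprob, hνIci, hνIoi⟩ := exists_nu (N - d) hk μ
    haveI := hνprob
    have hconv : ∀ (L₁ L₂ : ℝ≥0∞) (n₁ n₂ : ℕ), L₁ ≠ ∞ → L₂ ≠ ∞ →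
        ((n₁ : ℝ≥0∞) * L₁ ≤ (n₂ : ℝ≥0∞) * L₂) →
        (n₁ : ℝ) * L₁.toReal ≤ (n₂ : ℝ) * L₂.toReal := by
      intro L₁ L₂ n₁ n₂ h₁ h₂ hle
      have e1 : (n₁ : ℝ) * L₁.toReal = ((n₁ : ℝ≥0∞) * L₁).toReal := by
        rw [ENNReal.toReal_mul, ENNReal.toReal_natCast]
      have e2 : (n₂ : ℝ) * L₂.toReal = ((n₂ : ℝ≥0∞) * L₂).toReal := by
        rw [ENNReal.toReal_mul, ENNReal.toReal_natCast]
      rw [e1, e2]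
      exact ENNReal.toReal_mono (ENNReal.mul_ne_top (ENNReal.natCast_ne_top n₂) h₂) hle
    constructor
    · intro hnwu_real
      have hnwu : ∀ t₁ t₂ : ℝ, 0 ≤ t₁ → 0 ≤ t₂ →
          μ (Ioi t₁) * μ (Ioi t₂) ≤ μ (Ioi (t₁ + t₂)) := by
        intro t₁ t₂ ht₁ ht₂
        rw [hFbar_eq t₁, hFbar_eq t₂, hFbar_eq (t₁ + t₂),
          ← ENNReal.ofReal_mul (hFbar_nn t₁)]
        exact ENNReal.ofReal_le_ofReal (hnwu_real t₁ t₂ ht₁ ht₂)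
      have hkey := key_ineq_nwu hd0 hk hνIci hνIoi h0 hfin hnwu
      rw [hNdk] at hkey
      rw [hexpN, hexpd]
      exact hconv _ _ N d (L_ne_top hfin hN) (L_ne_top hfin hd0) hkey
    · intro hnbu_real
      have hnbu : ∀ t₁ t₂ : ℝ, 0 ≤ t₁ → 0 ≤ t₂ →
          μ (Ioi (t₁ + t₂)) ≤ μ (Ioi t₁) * μ (Ioi t₂) := by
        intro t₁ t₂ ht₁ ht₂
        rw [hFbar_eq t₁, hFbar_eq t₂, hFbar_eq (t₁ + t₂),
          ← ENNReal.ofReal_mul (hFbar_nn t₁)]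
        exact ENNReal.ofReal_le_ofReal (hnbu_real t₁ t₂ ht₁ ht₂)
      have hkey := key_ineq_nbu hd0 hk hνIci hνIoi h0 hfin hnbu
      rw [hNdk] at hkey
      rw [hexpN, hexpd]
      exact hconv _ _ d N (L_ne_top hfin hd0) (L_ne_top hfin hN) hkey

end AggAux

open MeasureTheory ProbabilityTheory Finset

/-- Aggregate resource usage `G(d) = d * E[min{Y₁,…,Y_d}]` of `d` simultaneously started
replicas: for i.i.d. copies `Y i` of `S` and any `1 ≤ d ≤ N`, if `S` is NWU then
`N * E[min of all N] ≤ d * E[min of first d]`; for NBU the reverse inequality holds. -/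
theorem aggregate_resource_usage_monotone
    {Ω : Type*} [MeasurableSpace Ω] (P : Measure Ω) [IsProbabilityMeasure P]
    (S : Ω → ℝ) (hS : ∀ ω, 0 ≤ S ω) (hSint : Integrable S P)
    (Fbar : ℝ → ℝ) (hFbar : ∀ t, Fbar t = (P {ω | t < S ω}).toReal)
    (N : ℕ) (hN : 0 < N) (Y : Fin N → Ω → ℝ)
    (hYmeas : ∀ i, Measurable (Y i))
    (hindep : iIndepFun Y P)
    (hid : ∀ i, IdentDistrib (Y i) S P P)
    (d : ℕ) (hd1 : 1 ≤ d) (hdN : d ≤ N) :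
    ((∀ t₁ t₂ : ℝ, 0 ≤ t₁ → 0 ≤ t₂ → Fbar (t₁ + t₂) ≥ Fbar t₁ * Fbar t₂) →
      (N : ℝ) * ∫ ω, (⨅ i : Fin N, Y i ω) ∂P ≤
        (d : ℝ) * ∫ ω, (⨅ i : Fin d, Y (Fin.castLE hdN i) ω) ∂P) ∧
    ((∀ t₁ t₂ : ℝ, 0 ≤ t₁ → 0 ≤ t₂ → Fbar (t₁ + t₂) ≤ Fbar t₁ * Fbar t₂) →
      (d : ℝ) * ∫ ω, (⨅ i : Fin d, Y (Fin.castLE hdN i) ω) ∂P ≤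
        (N : ℝ) * ∫ ω, (⨅ i : Fin N, Y i ω) ∂P) :=
  agg_aux_main P S hS hSint Fbar hFbar N hN Y hYmeas hindep hid d hd1 hdN
end

section
/- Let N ≥ 2, let r₁,…,r_N > 0, let S be a nonnegative integrable NWU random variable with E[S] > 0, and let Y₁,…,Y_N be i.i.d. copies of S. Define the full-replication threshold λ_N = 1/E[min{Y₁/r₁,…,Y_N/r_N}] (assuming the expectation is positive) and the best no-replication threshold λ₁ = (∑_{i=1}^N rᵢ)/E[S] (achieved with unknown job types by assigning to server i with probability proportional to rᵢ). Then λ_N ≥ λ₁. -/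
open MeasureTheory ProbabilityTheory Finset

/-- NWU product inequality over a nonempty finset. -/
lemma nwu_prod_le {N : ℕ} (r : Fin N → ℝ) (hr : ∀ i, 0 < r i)
    (Fbar : ℝ → ℝ) (hFnn : ∀ t, 0 ≤ Fbar t)
    (hNWU : ∀ t₁ t₂ : ℝ, 0 ≤ t₁ → 0 ≤ t₂ → Fbar (t₁ + t₂) ≥ Fbar t₁ * Fbar t₂)
    (t : ℝ) (ht : 0 ≤ t) :
    ∀ s : Finset (Fin N), s.Nonempty →
      ∏ i ∈ s, Fbar (r i * t) ≤ Fbar ((∑ i ∈ s, r i) * t) := by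
  intro s hs
  induction hs using Finset.Nonempty.cons_induction with
  | singleton i => simp
  | cons a s ha hs ih =>
      rw [Finset.prod_cons, Finset.sum_cons, add_mul]
      calc Fbar (r a * t) * ∏ i ∈ s, Fbar (r i * t)
          ≤ Fbar (r a * t) * Fbar ((∑ i ∈ s, r i) * t) := by
            apply mul_le_mul_of_nonneg_left ih (hFnn _)
        _ ≤ Fbar (r a * t + (∑ i ∈ s, r i) * t) := by
            apply hNWU
            · exact mul_nonneg (hr a).le ht
            · exact mul_nonneg (Finset.sum_nonneg fun i _ => (hr i).le) ht

/-- Single-job-type instance of Theorem 3: for an NWU nonnegative integrable random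
variable `S` with `E[S] > 0`, i.i.d. copies `Y i` and positive speeds `r i`, the
full-replication stability threshold `λ_N = 1 / E[min_i Y i / r i]` is at least the
best no-replication threshold `λ₁ = (∑ i, r i) / E[S]`. -/
theorem full_replication_threshold_ge
    {Ω : Type*} [MeasurableSpace Ω] (P : Measure Ω) [IsProbabilityMeasure P]
    (N : ℕ) (hN : 2 ≤ N) (r : Fin N → ℝ) (hr : ∀ i, 0 < r i)
    (S : Ω → ℝ) (hS : ∀ ω, 0 ≤ S ω) (hSint : Integrable S P)
    (Fbar : ℝ → ℝ) (hFbar : ∀ t, Fbar t = (P {ω | t < S ω}).toReal)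
    (hNWU : ∀ t₁ t₂ : ℝ, 0 ≤ t₁ → 0 ≤ t₂ → Fbar (t₁ + t₂) ≥ Fbar t₁ * Fbar t₂)
    (hES : 0 < ∫ ω, S ω ∂P)
    (Y : Fin N → Ω → ℝ) (hYmeas : ∀ i, Measurable (Y i))
    (hindep : iIndepFun Y P)
    (hid : ∀ i, IdentDistrib (Y i) S P P)
    (hEmin : 0 < ∫ ω, (⨅ i, Y i ω / r i) ∂P) :
    (∑ i, r i) / (∫ ω, S ω ∂P) ≤ 1 / (∫ ω, (⨅ i, Y i ω / r i) ∂P) := by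
  have hNpos : 0 < N := lt_of_lt_of_le (by norm_num) hN
  haveI : NeZero N := ⟨hNpos.ne'⟩
  set R : ℝ := ∑ i, r i with hR
  have hRpos : 0 < R := Finset.sum_pos (fun i _ => hr i) Finset.univ_nonempty
  set Z : Ω → ℝ := fun ω => ⨅ i, Y i ω / r i with hZ
  -- measurability of Z
  have hZmeas : Measurable Z := Measurable.iInf fun i => (hYmeas i).div_const _
  -- a.e. nonnegativity of each Y i
  have hYnn : ∀ i, ∀ᵐ ω ∂P, 0 ≤ Y i ω := by
    intro i
    have h0 : P (Y i ⁻¹' Set.Iio 0) = P (S ⁻¹' Set.Iio 0) :=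
      (hid i).measure_mem_eq measurableSet_Iio
    have hSzero : P (S ⁻¹' Set.Iio 0) = 0 := by
      have : S ⁻¹' Set.Iio 0 = ∅ := by
        ext ω; simp [Set.mem_preimage, not_lt.2 (hS ω)]
      simp [this]
    rw [ae_iff]
    convert h0.trans hSzero using 2
    ext ω; simp [Set.mem_preimage, not_le]
  have hZnn : ∀ᵐ ω ∂P, 0 ≤ Z ω := by
    have := (MeasureTheory.ae_all_iff (ι := Fin N)).2 hYnn
    filter_upwards [this] with ω hω
    exact le_ciInf fun i => div_nonneg (hω i) (hr i).le
  -- key: tail sets and lintegral identities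
  have hFnn : ∀ t, 0 ≤ Fbar t := fun t => by rw [hFbar]; exact ENNReal.toReal_nonneg
  have hμS_le_one : ∀ u : ℝ, P {ω | u < S ω} ≤ 1 := fun u => prob_le_one
  -- product identity from independence for t > 0
  have htail : ∀ t : ℝ, 0 < t → P {ω | t < Z ω} ≤ P {ω | R * t < S ω} := by
    intro t ht
    have hset : {ω | t < Z ω} = ⋂ i, Y i ⁻¹' Set.Ioi (r i * t) := by
      ext ω
      simp only [Set.mem_setOf_eq, Set.mem_iInter, Set.mem_preimage, Set.mem_Ioi, hZ]
      have hb : BddBelow (Set.range fun i => Y i ω / r i) :=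
        (Set.finite_range _).bddBelow
      constructor
      · intro h i
        have := lt_of_lt_of_le h (ciInf_le hb i)
        rwa [lt_div_iff₀ (hr i), mul_comm] at this
      · intro h
        obtain ⟨i0, hi0⟩ := exists_eq_ciInf_of_finite (f := fun i => Y i ω / r i)
        rw [← hi0, lt_div_iff₀ (hr i0), mul_comm]
        exact h i0
    have hprod : P (⋂ i, Y i ⁻¹' Set.Ioi (r i * t)) = ∏ i, P (Y i ⁻¹' Set.Ioi (r i * t)) :=
      hindep.meas_iInter fun i => ⟨Set.Ioi (r i * t), measurableSet_Ioi, rfl⟩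
    have hident : ∀ i, P (Y i ⁻¹' Set.Ioi (r i * t)) = P {ω | r i * t < S ω} := by
      intro i
      have := (hid i).measure_mem_eq (measurableSet_Ioi (a := r i * t))
      convert this using 2
      rfl
    rw [hset, hprod]
    -- now compare via toReal
    have hfin : ∀ i, P (Y i ⁻¹' Set.Ioi (r i * t)) ≠ ⊤ := fun i => measure_ne_top P _
    have hprodle : ∏ i, Fbar (r i * t) ≤ Fbar (R * t) :=
      nwu_prod_le r hr Fbar hFnn hNWU t ht.le Finset.univ Finset.univ_nonempty
    have htoReal : (∏ i, P (Y i ⁻¹' Set.Ioi (r i * t))).toReal = ∏ i, Fbar (r i * t) := by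
      rw [ENNReal.toReal_prod]
      exact Finset.prod_congr rfl fun i _ => by rw [hident i, hFbar]
    have h1 : (∏ i, P (Y i ⁻¹' Set.Ioi (r i * t))).toReal ≤ (P {ω | R * t < S ω}).toReal := by
      rw [htoReal, ← hFbar]; exact hprodle
    exact (ENNReal.toReal_le_toReal (ENNReal.prod_ne_top fun i _ => hfin i)
      (measure_ne_top P _)).1 h1
  -- lintegral comparison
  have hSmeas : AEMeasurable S P := (hid ⟨0, hNpos⟩).aemeasurable_snd
  have hA : (∫⁻ ω, ENNReal.ofReal (Z ω) ∂P) = ∫⁻ t in Set.Ioi 0, P {ω | t < Z ω} :=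
    lintegral_eq_lintegral_meas_lt P hZnn hZmeas.aemeasurable
  have hSRnn : ∀ᵐ ω ∂P, 0 ≤ S ω / R := ae_of_all P fun ω => div_nonneg (hS ω) hRpos.le
  have hB : (∫⁻ ω, ENNReal.ofReal (S ω / R) ∂P) = ∫⁻ t in Set.Ioi 0, P {ω | R * t < S ω} := by
    rw [lintegral_eq_lintegral_meas_lt P hSRnn (hSmeas.div_const R)]
    apply lintegral_congr
    intro t
    congr 1
    ext ω
    simp only [Set.mem_setOf_eq]
    rw [lt_div_iff₀ hRpos, mul_comm]
  have hg_meas : Measurable fun t : ℝ => P {ω | R * t < S ω} := by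
    have : Antitone fun t : ℝ => P {ω | R * t < S ω} := by
      intro a b hab
      apply measure_mono
      intro ω hω
      simp only [Set.mem_setOf_eq] at *
      exact lt_of_le_of_lt (by nlinarith) hω
    exact this.measurable
  have hAB : (∫⁻ ω, ENNReal.ofReal (Z ω) ∂P) ≤ ∫⁻ ω, ENNReal.ofReal (S ω / R) ∂P := by
    rw [hA, hB]
    exact setLIntegral_mono hg_meas fun t ht => htail t ht
  -- convert to real integrals
  have hZint_eq : ∫ ω, Z ω ∂P = (∫⁻ ω, ENNReal.ofReal (Z ω) ∂P).toReal :=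
    integral_eq_lintegral_of_nonneg_ae hZnn hZmeas.aestronglyMeasurable
  have hSRint : Integrable (fun ω => S ω / R) P := hSint.div_const R
  have hSR_eq : (∫⁻ ω, ENNReal.ofReal (S ω / R) ∂P) = ENNReal.ofReal (∫ ω, S ω / R ∂P) :=
    (ofReal_integral_eq_lintegral_ofReal hSRint hSRnn).symm
  have hEZ_le : ∫ ω, Z ω ∂P ≤ (∫ ω, S ω ∂P) / R := by
    rw [hZint_eq]
    have := ENNReal.toReal_mono (by rw [hSR_eq]; exact ENNReal.ofReal_ne_top) hAB
    rw [hSR_eq, ENNReal.toReal_ofReal (integral_nonneg_of_ae hSRnn)] at this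
    rwa [integral_div] at this
  -- final algebra
  rw [div_le_div_iff₀ hES hEmin]
  have h2 : (∫ ω, Z ω ∂P) * R ≤ ∫ ω, S ω ∂P := by
    rw [← le_div_iff₀ hRpos]; exact hEZ_le
  nlinarith [hEmin, hRpos]
end
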